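/- arXiv:2207.14217 — 6 statements merged into one kernel-verified Lean document; each statement's English description precedes it below -/
import Mathlib

section
/- Let n ≥ 1 be an integer, D ⊆ ℝⁿ open, and η : D → ℝ continuous with 0 < η(x) ≤ H for all x ∈ D, for some constant H. Fix real constants s ≥ 0, κ with 2κ ≥ n − 2 and 2κ + 2 − s > 0, and λ, p, f⋆ > 0. Set f(ρ,x) := ρ/η(x), Ω := {(ρ,x) ∈ (0,∞) × D : f(ρ,x) < f⋆}, and for ρ⁎ > 0 let D_{ρ⁎} := {x ∈ D : ρ⁎ < f⋆ η(x)}. Let Ψ : (0,∞) × D → ℝ^d be continuous and continuously differentiable in ρ. Then, as an inequality in [0,∞] with all integrals taken with respect to Lebesgue measure: (2κ+2−s) · λ · ∫_Ω e^{−λ f^p/p} f^{n−2−2κ} ρ^{s−n−1} |Ψ|² ≤ ∫_Ω e^{−λ f^p/p} f^{n−2−p−2κ} ρ^{s−n+1} |∂_ρ Ψ|² + λ · H^{2κ+2−n} · limsup_{ρ⁎→0⁺} ∫_{D_{ρ⁎}} ρ⁎^{s−2κ−2} |Ψ(ρ⁎, x)|² dx. -/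
open Set MeasureTheory Filter
open scoped ENNReal NNReal

set_option maxHeartbeats 2000000

noncomputable section

lemma lintegral_iUnion_mono_sets {α : Type*} [MeasurableSpace α] (μ : Measure α) {s : ℕ → Set α}
    (hm : Monotone s) (hms : ∀ m, MeasurableSet (s m)) {f : α → ℝ≥0∞}
    (hf : ∀ m, AEMeasurable f (μ.restrict (s m))) :
    ∫⁻ a in ⋃ m, s m, f a ∂μ = ⨆ m, ∫⁻ a in s m, f a ∂μ := by
  have hU : MeasurableSet (⋃ m, s m) := MeasurableSet.iUnion hms
  rw [← lintegral_indicator hU]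
  have h2 : ∀ m, ∫⁻ a in s m, f a ∂μ = ∫⁻ a, (s m).indicator f a ∂μ := fun m =>
    (lintegral_indicator (hms m) f).symm
  simp_rw [h2]
  rw [← lintegral_iSup' (fun m => (aemeasurable_indicator_iff (hms m)).2 (hf m))
    (ae_of_all _ (fun a m m' hmm' =>
      Set.indicator_le_indicator_of_subset (hm hmm') (fun a => zero_le) a))]
  apply lintegral_congr
  intro a
  by_cases ha : a ∈ ⋃ m, s m
  · obtain ⟨m₀, hm₀⟩ := mem_iUnion.1 ha
    rw [Set.indicator_of_mem ha]
    apply le_antisymm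
    · exact le_iSup_of_le m₀ (le_of_eq (Set.indicator_of_mem hm₀ f).symm)
    · exact iSup_le fun m => Set.indicator_le (fun _ _ => le_rfl) a
  · rw [Set.indicator_of_notMem ha]
    symm
    simp only [ENNReal.iSup_eq_zero]
    intro m
    exact Set.indicator_of_notMem (fun h => ha (mem_iUnion.2 ⟨m, h⟩)) f

lemma expDeriv (t e lam p : ℝ) (ht : 0 < t) (he : 0 < e) (hp : 0 < p) :
    HasDerivAt (fun u : ℝ => Real.exp (-(lam * (u / e) ^ p / p)))
      (Real.exp (-(lam * (t / e) ^ p / p)) * (-lam * (t ^ (p-1) * e ^ (-p)))) t := by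
  have hF : (0:ℝ) < t / e := div_pos ht he
  have hbase : HasDerivAt (fun u : ℝ => u / e) (1 / e) t := (hasDerivAt_id t).div_const e
  have hpow : HasDerivAt (fun u : ℝ => (u / e) ^ p) (1 / e * p * (t / e) ^ (p - 1)) t :=
    hbase.rpow_const (Or.inl hF.ne')
  have hin : HasDerivAt (fun u : ℝ => -(lam * (u / e) ^ p / p))
      (-(lam * (1 / e * p * (t / e) ^ (p - 1)) / p)) t := ((hpow.const_mul lam).div_const p).neg
  have h2 := hin.exp
  convert h2 using 1
  have hdiv : (t / e) ^ (p - 1) = t ^ (p-1) * e ^ (-(p-1)) := by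
    rw [Real.div_rpow ht.le he.le, Real.rpow_neg he.le, div_eq_mul_inv]
  rw [hdiv]
  have r : e ^ (-p) * e ^ (1:ℝ) = e ^ (-(p-1)) := by rw [← Real.rpow_add he]; ring_nf
  rw [Real.rpow_one] at r
  rw [← r]
  field_simp

lemma onedim {d : ℕ} (ψ ψ' : ℝ → EuclideanSpace ℝ (Fin d))
    (hc : ContinuousOn ψ (Ioi 0)) (hder : ∀ t ∈ Ioi (0:ℝ), HasDerivAt ψ (ψ' t) t)
    (hdc : ContinuousOn ψ' (Ioi 0))
    (n : ℕ) (s κ lam p H e a R : ℝ)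
    (hκ : (n : ℝ) - 2 ≤ 2 * κ) (hC : 0 ≤ (2 * κ + 2 - s) * lam)
    (hlam : 0 < lam) (hp : 0 < p)
    (he : 0 < e) (heH : e ≤ H) (ha : 0 < a) (haR : a < R) :
    ENNReal.ofReal ((2 * κ + 2 - s) * lam) *
      ∫⁻ t in Ioo a R, ENNReal.ofReal (Real.exp (-(lam * (t / e) ^ p / p)) *
          (t / e) ^ ((n : ℝ) - 2 - 2 * κ) * t ^ (s - (n : ℝ) - 1) * ‖ψ t‖ ^ 2)
    ≤ (∫⁻ t in Ioo a R, ENNReal.ofReal (Real.exp (-(lam * (t / e) ^ p / p)) *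
          (t / e) ^ ((n : ℝ) - 2 - p - 2 * κ) * t ^ (s - (n : ℝ) + 1) * ‖ψ' t‖ ^ 2))
      + ENNReal.ofReal (lam * H ^ (2 * κ + 2 - (n : ℝ))) *
          ENNReal.ofReal (a ^ (s - 2 * κ - 2) * ‖ψ a‖ ^ 2) := by
  have hH : 0 < H := lt_of_lt_of_le he heH
  have hc₂0 : 0 ≤ 2 * κ + 2 - (n:ℝ) := by linarith
  set A : ℝ → ℝ := fun t => Real.exp (-(lam * (t / e) ^ p / p)) with hAdef
  set L : ℝ → ℝ := fun t => A t * (t / e) ^ ((n : ℝ) - 2 - 2 * κ) * t ^ (s - (n : ℝ) - 1) * ‖ψ t‖ ^ 2 with hLdef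
  set Rd : ℝ → ℝ := fun t => A t * (t / e) ^ ((n : ℝ) - 2 - p - 2 * κ) * t ^ (s - (n : ℝ) + 1) * ‖ψ' t‖ ^ 2 with hRdef
  set G : ℝ → ℝ := fun t => lam * e ^ (2 * κ + 2 - (n:ℝ)) * (A t * (t ^ (s - 2*κ - 2) * ‖ψ t‖ ^ 2)) with hGdef
  set g : ℝ → ℝ := fun t => lam * e ^ (2 * κ + 2 - (n:ℝ)) *
      ((A t * (-lam * (t ^ (p-1) * e ^ (-p)))) * (t ^ (s - 2*κ - 2) * ‖ψ t‖ ^ 2)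
        + A t * ((s - 2*κ - 2) * t ^ (s - 2*κ - 2 - 1) * ‖ψ t‖ ^ 2
            + t ^ (s - 2*κ - 2) * (2 * (inner ℝ (ψ t) (ψ' t) : ℝ)))) with hgdef
  -- derivative of A
  have hA' : ∀ t ∈ Ioi (0:ℝ), HasDerivAt A (A t * (-lam * (t ^ (p-1) * e ^ (-p)))) t :=
    fun t ht => expDeriv t e lam p ht he hp
  -- derivative of G
  have hG' : ∀ t ∈ Ioi (0:ℝ), HasDerivAt G (g t) t := by
    intro t ht
    have ht0 : (0:ℝ) < t := ht
    have hN : HasDerivAt (fun u => ‖ψ u‖ ^ 2) (2 * (inner ℝ (ψ t) (ψ' t) : ℝ)) t := by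
      have h1 : HasDerivAt (fun u => (inner ℝ (ψ u) (ψ u) : ℝ))
          ((inner ℝ (ψ t) (ψ' t) : ℝ) + (inner ℝ (ψ' t) (ψ t) : ℝ)) t :=
        (hder t ht).inner ℝ (hder t ht)
      have h2 : (fun u => (inner ℝ (ψ u) (ψ u) : ℝ)) = fun u => ‖ψ u‖ ^ 2 := by
        funext u; exact real_inner_self_eq_norm_sq (ψ u)
      rw [h2] at h1
      convert h1 using 1
      rw [real_inner_comm]; ring
    have hPow : HasDerivAt (fun u : ℝ => u ^ (s - 2*κ - 2)) ((s - 2*κ - 2) * t ^ (s - 2*κ - 2 - 1)) t :=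
      Real.hasDerivAt_rpow_const (Or.inl ht0.ne')
    have hinner : HasDerivAt (fun u : ℝ => u ^ (s - 2*κ - 2) * ‖ψ u‖ ^ 2)
        ((s - 2*κ - 2) * t ^ (s - 2*κ - 2 - 1) * ‖ψ t‖ ^ 2
          + t ^ (s - 2*κ - 2) * (2 * (inner ℝ (ψ t) (ψ' t) : ℝ))) t := hPow.mul hN
    exact ((hA' t ht).mul hinner).const_mul _
  -- pointwise inequality
  have hptwise : ∀ t ∈ Ioi (0:ℝ), (2 * κ + 2 - s) * lam * L t + g t ≤ Rd t := by
    intro t ht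
    have ht0 : (0:ℝ) < t := ht
    have hF : (0:ℝ) < t / e := div_pos ht0 he
    have hT : ∀ u v w : ℝ, u + v = w → t ^ u * t ^ v = t ^ w := fun u v w h => by
      rw [← Real.rpow_add ht0, h]
    have hE : ∀ u v w : ℝ, u + v = w → e ^ u * e ^ v = e ^ w := fun u v w h => by
      rw [← Real.rpow_add he, h]
    have hDiv : ∀ q : ℝ, (t / e) ^ q = t ^ q * e ^ (-q) := fun q => by
      rw [Real.div_rpow ht0.le he.le, Real.rpow_neg he.le, div_eq_mul_inv]
    have hIP : (inner ℝ (ψ t) (ψ' t) : ℝ) ≤ ‖ψ t‖ * ‖ψ' t‖ := real_inner_le_norm _ _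
    set a1 : ℝ := lam * (t ^ ((p-1)/2) * e ^ (-(p/2))) * ‖ψ t‖ with ha1
    set b1 : ℝ := (e ^ (p/2) * t ^ ((1-p)/2)) * ‖ψ' t‖ with hb1
    have h2ab : 2 * a1 * b1 ≤ a1^2 + b1^2 := two_mul_le_add_sq a1 b1
    have e1 := hT ((p-1)/2) ((p-1)/2) (p-1) (by ring)
    have e2 := hE (-(p/2)) (-(p/2)) (-p) (by ring)
    have e3 := hE (p/2) (p/2) p (by ring)
    have e4 := hT ((1-p)/2) ((1-p)/2) (1-p) (by ring)
    have e5 : t ^ ((p-1)/2) * t ^ ((1-p)/2) = 1 := by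
      rw [hT _ _ 0 (by ring), Real.rpow_zero]
    have e6 : e ^ (-(p/2)) * e ^ (p/2) = 1 := by
      rw [hE _ _ 0 (by ring), Real.rpow_zero]
    have ha2 : a1^2 = lam^2 * t^(p-1) * e^(-p) * ‖ψ t‖^2 := by
      rw [ha1]
      linear_combination (lam^2 * (e ^ (-(p/2)) * e ^ (-(p/2))) * ‖ψ t‖^2) * e1
        + (lam^2 * t^(p-1) * ‖ψ t‖^2) * e2
    have hb2 : b1^2 = e^p * t^(1-p) * ‖ψ' t‖^2 := by
      rw [hb1]
      linear_combination ((t ^ ((1-p)/2) * t ^ ((1-p)/2)) * ‖ψ' t‖^2) * e3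
        + (e^p * ‖ψ' t‖^2) * e4
    have hab : a1 * b1 = lam * (‖ψ t‖ * ‖ψ' t‖) := by
      rw [ha1, hb1]
      linear_combination (lam * (e ^ (-(p/2)) * e ^ (p/2)) * ‖ψ t‖ * ‖ψ' t‖) * e5
        + (lam * ‖ψ t‖ * ‖ψ' t‖) * e6
    have h5 : 2 * lam * (inner ℝ (ψ t) (ψ' t) : ℝ) ≤ 2 * lam * (‖ψ t‖ * ‖ψ' t‖) :=
      mul_le_mul_of_nonneg_left hIP (by positivity)
    have key2 : 2 * lam * (inner ℝ (ψ t) (ψ' t) : ℝ) - lam^2 * t^(p-1) * e^(-p) * ‖ψ t‖^2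
        ≤ e^p * t^(1-p) * ‖ψ' t‖^2 := by nlinarith [h2ab, ha2, hb2, hab, h5]
    set P : ℝ := e ^ (2 * κ + 2 - (n:ℝ)) * A t * t ^ (s - 2*κ - 2) with hPdef
    have hPnn : 0 ≤ P := by
      apply mul_nonneg (mul_nonneg (Real.rpow_nonneg he.le _) (Real.exp_pos _).le)
        (Real.rpow_nonneg ht0.le _)
    have hL : (2 * κ + 2 - s) * lam * L t + g t
        = P * (2 * lam * (inner ℝ (ψ t) (ψ' t) : ℝ) - lam^2 * t^(p-1) * e^(-p) * ‖ψ t‖^2) := by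
      rw [hLdef, hgdef, hPdef]
      simp only
      rw [hDiv ((n:ℝ) - 2 - 2*κ), show -((n:ℝ) - 2 - 2*κ) = 2*κ + 2 - (n:ℝ) by ring]
      have r1 := hT ((n:ℝ) - 2 - 2*κ) (s - (n:ℝ) - 1) (s - 2*κ - 2 - 1) (by ring)
      linear_combination ((2*κ+2-s) * lam * A t * e ^ (2*κ+2-(n:ℝ)) * ‖ψ t‖^2) * r1
    have hR : Rd t = P * (e^p * t^(1-p) * ‖ψ' t‖^2) := by
      rw [hRdef, hPdef]
      simp only
      rw [hDiv ((n:ℝ) - 2 - p - 2*κ), show -((n:ℝ) - 2 - p - 2*κ) = 2*κ + 2 + p - (n:ℝ) by ring]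
      have r2a := hT ((n:ℝ) - 2 - p - 2*κ) (s - (n:ℝ) + 1) (s - 2*κ - 1 - p) (by ring)
      have r2b := hT (s - 2*κ - 2) (1-p) (s - 2*κ - 1 - p) (by ring)
      have r2c := hE (2*κ+2-(n:ℝ)) p (2*κ+2+p-(n:ℝ)) (by ring)
      linear_combination (A t * e^(2*κ+2+p-(n:ℝ)) * ‖ψ' t‖^2) * r2a
        - (A t * e^(2*κ+2+p-(n:ℝ)) * ‖ψ' t‖^2) * r2b
        - (A t * ‖ψ' t‖^2 * (t ^ (s - 2*κ - 2) * t ^ (1-p))) * r2c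
    rw [hL, hR]
    exact mul_le_mul_of_nonneg_left key2 hPnn
  -- continuity facts on Ioi 0
  have hrp : ∀ q : ℝ, ContinuousOn (fun t : ℝ => t ^ q) (Ioi 0) := fun q =>
    continuousOn_id.rpow_const (fun t ht => Or.inl (ne_of_gt ht))
  have hdiveq : ∀ q : ℝ, ContinuousOn (fun t : ℝ => (t / e) ^ q) (Ioi 0) := fun q =>
    ((continuous_id.div_const e).continuousOn).rpow_const
      (fun t ht => Or.inl (ne_of_gt (div_pos ht he)))
  have hcontA : ContinuousOn A (Ioi 0) := by
    apply Real.continuous_exp.comp_continuousOn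
    exact ((continuousOn_const.mul (hdiveq p)).div_const p).neg
  have hcontN : ContinuousOn (fun t => ‖ψ t‖ ^ 2) (Ioi 0) := (hc.norm.pow 2)
  have hcontN' : ContinuousOn (fun t => ‖ψ' t‖ ^ 2) (Ioi 0) := (hdc.norm.pow 2)
  have hcontL : ContinuousOn L (Ioi 0) := by
    rw [hLdef]; exact ((hcontA.mul (hdiveq _)).mul (hrp _)).mul hcontN
  have hcontRd : ContinuousOn Rd (Ioi 0) := by
    rw [hRdef]; exact ((hcontA.mul (hdiveq _)).mul (hrp _)).mul hcontN'
  have hcontIP : ContinuousOn (fun t => (inner ℝ (ψ t) (ψ' t) : ℝ)) (Ioi 0) := hc.inner hdc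
  have hcontg : ContinuousOn g (Ioi 0) := by
    rw [hgdef]
    apply ContinuousOn.mul continuousOn_const
    apply ContinuousOn.add
    · exact (hcontA.mul (continuousOn_const.mul ((hrp _).mul continuousOn_const))).mul
        ((hrp _).mul hcontN)
    · exact hcontA.mul (((continuousOn_const.mul (hrp _)).mul hcontN).add
        ((hrp _).mul (continuousOn_const.mul hcontIP)))
  have hIcc : Icc a R ⊆ Ioi 0 := fun t ht => lt_of_lt_of_le ha ht.1
  have huIcc : uIcc a R = Icc a R := uIcc_of_le haR.le
  -- interval integrability
  have hintL : IntervalIntegrable L volume a R :=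
    (hcontL.mono (huIcc ▸ hIcc)).intervalIntegrable
  have hintRd : IntervalIntegrable Rd volume a R :=
    (hcontRd.mono (huIcc ▸ hIcc)).intervalIntegrable
  have hintg : IntervalIntegrable g volume a R :=
    (hcontg.mono (huIcc ▸ hIcc)).intervalIntegrable
  have hintCL : IntervalIntegrable (fun t => (2 * κ + 2 - s) * lam * L t) volume a R :=
    hintL.const_mul _
  -- FTC
  have h_ftc : ∫ t in a..R, g t = G R - G a :=
    intervalIntegral.integral_eq_sub_of_hasDerivAt
      (fun t ht => hG' t (hIcc (huIcc ▸ ht))) hintg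
  have hmono : (∫ t in a..R, ((2 * κ + 2 - s) * lam * L t + g t))
      ≤ ∫ t in a..R, Rd t :=
    intervalIntegral.integral_mono_on haR.le (hintCL.add hintg) hintRd
      (fun t ht => hptwise t (hIcc ht))
  have hsplit : (∫ t in a..R, ((2 * κ + 2 - s) * lam * L t + g t))
      = (2 * κ + 2 - s) * lam * (∫ t in a..R, L t) + (G R - G a) := by
    rw [intervalIntegral.integral_add hintCL hintg, h_ftc,
      intervalIntegral.integral_const_mul]
  have hGR : 0 ≤ G R := by
    rw [hGdef]
    have : (0:ℝ) < R := lt_trans ha haR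
    apply mul_nonneg (mul_nonneg hlam.le (Real.rpow_nonneg he.le _))
    exact mul_nonneg (Real.exp_pos _).le (mul_nonneg (Real.rpow_nonneg this.le _) (by positivity))
  have hreal : (2 * κ + 2 - s) * lam * (∫ t in a..R, L t)
      ≤ (∫ t in a..R, Rd t) + G a := by linarith
  -- bound G a
  have hGa : G a ≤ lam * H ^ (2 * κ + 2 - (n:ℝ)) * (a ^ (s - 2*κ - 2) * ‖ψ a‖ ^ 2) := by
    rw [hGdef]
    have h1 : e ^ (2 * κ + 2 - (n:ℝ)) ≤ H ^ (2 * κ + 2 - (n:ℝ)) :=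
      Real.rpow_le_rpow he.le heH hc₂0
    have h2 : A a ≤ 1 := by
      rw [hAdef]
      apply Real.exp_le_one_iff.mpr
      have : (0:ℝ) ≤ lam * (a / e) ^ p / p := by positivity
      linarith
    have h3 : (0:ℝ) ≤ a ^ (s - 2*κ - 2) * ‖ψ a‖ ^ 2 :=
      mul_nonneg (Real.rpow_nonneg ha.le _) (by positivity)
    have h4 : A a * (a ^ (s - 2*κ - 2) * ‖ψ a‖ ^ 2) ≤ a ^ (s - 2*κ - 2) * ‖ψ a‖ ^ 2 := by
      nlinarith [Real.exp_pos (-(lam * (a / e) ^ p / p))]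
    have h5 : (0:ℝ) ≤ A a := by rw [hAdef]; positivity
    beta_reduce
    calc lam * e ^ (2 * κ + 2 - (n:ℝ)) * (A a * (a ^ (s - 2*κ - 2) * ‖ψ a‖ ^ 2))
        ≤ lam * e ^ (2 * κ + 2 - (n:ℝ)) * (a ^ (s - 2*κ - 2) * ‖ψ a‖ ^ 2) :=
          mul_le_mul_of_nonneg_left h4 (mul_nonneg hlam.le (Real.rpow_nonneg he.le _))
      _ ≤ lam * H ^ (2 * κ + 2 - (n:ℝ)) * (a ^ (s - 2*κ - 2) * ‖ψ a‖ ^ 2) :=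
          mul_le_mul_of_nonneg_right (mul_le_mul_of_nonneg_left h1 hlam.le) h3
  -- ENNReal conversions
  have hLnn : 0 ≤ᵐ[volume.restrict (Ioo a R)] L := by
    filter_upwards [ae_restrict_mem measurableSet_Ioo] with t ht
    have ht0 : (0:ℝ) < t := lt_trans ha ht.1
    rw [hLdef]
    apply mul_nonneg (mul_nonneg (mul_nonneg (Real.exp_pos _).le (Real.rpow_nonneg (by positivity) _)) (Real.rpow_nonneg ht0.le _)) (by positivity)
  have hRdnn : 0 ≤ᵐ[volume.restrict (Ioo a R)] Rd := by
    filter_upwards [ae_restrict_mem measurableSet_Ioo] with t ht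
    have ht0 : (0:ℝ) < t := lt_trans ha ht.1
    rw [hRdef]
    apply mul_nonneg (mul_nonneg (mul_nonneg (Real.exp_pos _).le (Real.rpow_nonneg (by positivity) _)) (Real.rpow_nonneg ht0.le _)) (by positivity)
  have hLintOn : IntegrableOn L (Ioo a R) volume :=
    ((hcontL.mono hIcc).integrableOn_Icc).mono_set Ioo_subset_Icc_self
  have hRdintOn : IntegrableOn Rd (Ioo a R) volume :=
    ((hcontRd.mono hIcc).integrableOn_Icc).mono_set Ioo_subset_Icc_self
  have convL : (∫⁻ t in Ioo a R, ENNReal.ofReal (L t)) = ENNReal.ofReal (∫ t in a..R, L t) := by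
    rw [← ofReal_integral_eq_lintegral_ofReal hLintOn hLnn,
      intervalIntegral.integral_of_le haR.le, ← integral_Ioc_eq_integral_Ioo]
  have convRd : (∫⁻ t in Ioo a R, ENNReal.ofReal (Rd t)) = ENNReal.ofReal (∫ t in a..R, Rd t) := by
    rw [← ofReal_integral_eq_lintegral_ofReal hRdintOn hRdnn,
      intervalIntegral.integral_of_le haR.le, ← integral_Ioc_eq_integral_Ioo]
  calc ENNReal.ofReal ((2 * κ + 2 - s) * lam) * ∫⁻ t in Ioo a R, ENNReal.ofReal (L t)
      = ENNReal.ofReal ((2 * κ + 2 - s) * lam * (∫ t in a..R, L t)) := by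
        rw [convL, ENNReal.ofReal_mul hC]
    _ ≤ ENNReal.ofReal ((∫ t in a..R, Rd t) + G a) := ENNReal.ofReal_le_ofReal hreal
    _ ≤ ENNReal.ofReal (∫ t in a..R, Rd t) + ENNReal.ofReal (G a) := ENNReal.ofReal_add_le
    _ ≤ (∫⁻ t in Ioo a R, ENNReal.ofReal (Rd t))
          + ENNReal.ofReal (lam * H ^ (2 * κ + 2 - (n:ℝ))) *
            ENNReal.ofReal (a ^ (s - 2 * κ - 2) * ‖ψ a‖ ^ 2) := by
        rw [convRd]
        apply add_le_add_right
        rw [← ENNReal.ofReal_mul (by positivity)]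
        exact ENNReal.ofReal_le_ofReal hGa


/-- **Carleman estimate for transport equations** (flat-model version of Proposition 4.2):
for the region `Ω = {ρ/η(x) < f⋆}` near the conformal boundary `{ρ = 0}` and the Carleman
weight `e^{−λ f^p/p} f^{n−2−2κ}` with `f = ρ/η`, the transport derivative `∂_ρ Ψ` controls
`Ψ` up to a boundary term, as an inequality in `[0,∞]` for Lebesgue integrals. -/
theorem transport_carleman
    {n : ℕ} (hn : 1 ≤ n) {d : ℕ} (hd : 1 ≤ d)
    {D : Set (Fin n → ℝ)} (hD : IsOpen D)
    (η : (Fin n → ℝ) → ℝ) (hηcont : ContinuousOn η D)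
    (H : ℝ) (hη : ∀ x ∈ D, 0 < η x ∧ η x ≤ H)
    (s κ lam p fstar : ℝ) (hs : 0 ≤ s) (hκ : (n : ℝ) - 2 ≤ 2 * κ)
    (hκs : 0 < 2 * κ + 2 - s) (hlam : 0 < lam) (hp : 0 < p) (hfstar : 0 < fstar)
    (Ψ : ℝ × (Fin n → ℝ) → EuclideanSpace ℝ (Fin d))
    (hΨcont : ContinuousOn Ψ (Ioi 0 ×ˢ D))
    (hΨdiff : ∀ x ∈ D, ∀ ρ ∈ Ioi (0 : ℝ),
      HasDerivAt (fun t => Ψ (t, x)) (deriv (fun t => Ψ (t, x)) ρ) ρ)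
    (hΨdcont : ∀ x ∈ D, ContinuousOn (fun ρ => deriv (fun t => Ψ (t, x)) ρ) (Ioi 0)) :
    ENNReal.ofReal ((2 * κ + 2 - s) * lam) *
      (∫⁻ z in {z : ℝ × (Fin n → ℝ) | z.2 ∈ D ∧ 0 < z.1 ∧ z.1 / η z.2 < fstar},
        ENNReal.ofReal (Real.exp (-(lam * (z.1 / η z.2) ^ p / p)) *
          (z.1 / η z.2) ^ ((n : ℝ) - 2 - 2 * κ) * z.1 ^ (s - (n : ℝ) - 1) * ‖Ψ z‖ ^ 2))
    ≤ (∫⁻ z in {z : ℝ × (Fin n → ℝ) | z.2 ∈ D ∧ 0 < z.1 ∧ z.1 / η z.2 < fstar},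
        ENNReal.ofReal (Real.exp (-(lam * (z.1 / η z.2) ^ p / p)) *
          (z.1 / η z.2) ^ ((n : ℝ) - 2 - p - 2 * κ) * z.1 ^ (s - (n : ℝ) + 1) *
          ‖deriv (fun t => Ψ (t, z.2)) z.1‖ ^ 2))
      + ENNReal.ofReal lam * ENNReal.ofReal (H ^ (2 * κ + 2 - (n : ℝ))) *
        Filter.limsup (fun ρs : ℝ =>
          ∫⁻ x in {x : Fin n → ℝ | x ∈ D ∧ ρs < fstar * η x},
            ENNReal.ofReal (ρs ^ (s - 2 * κ - 2) * ‖Ψ (ρs, x)‖ ^ 2))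
          (nhdsWithin 0 (Ioi 0)) := by
  classical
  have hC : 0 ≤ (2 * κ + 2 - s) * lam := le_of_lt (mul_pos hκs hlam)
  rcases D.eq_empty_or_nonempty with hDe | hDne
  · have hset : {z : ℝ × (Fin n → ℝ) | z.2 ∈ D ∧ 0 < z.1 ∧ z.1 / η z.2 < fstar} = ∅ := by
      ext z; simp [hDe]
    rw [hset, Measure.restrict_empty, lintegral_zero_measure, mul_zero]
    exact zero_le
  obtain ⟨x₀, hx₀⟩ := hDne
  have hH : 0 < H := lt_of_lt_of_le (hη x₀ hx₀).1 (hη x₀ hx₀).2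
  set I₁ : ℝ × (Fin n → ℝ) → ℝ≥0∞ := fun z =>
    ENNReal.ofReal (Real.exp (-(lam * (z.1 / η z.2) ^ p / p)) *
      (z.1 / η z.2) ^ ((n : ℝ) - 2 - 2 * κ) * z.1 ^ (s - (n : ℝ) - 1) * ‖Ψ z‖ ^ 2) with hI₁def
  set I₂ : ℝ × (Fin n → ℝ) → ℝ≥0∞ := fun z =>
    ENNReal.ofReal (Real.exp (-(lam * (z.1 / η z.2) ^ p / p)) *
      (z.1 / η z.2) ^ ((n : ℝ) - 2 - p - 2 * κ) * z.1 ^ (s - (n : ℝ) + 1) *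
      ‖deriv (fun t => Ψ (t, z.2)) z.1‖ ^ 2) with hI₂def
  set Bnd : ℝ → ℝ≥0∞ := fun ρs =>
    ∫⁻ x in {x : Fin n → ℝ | x ∈ D ∧ ρs < fstar * η x},
      ENNReal.ofReal (ρs ^ (s - 2 * κ - 2) * ‖Ψ (ρs, x)‖ ^ 2) with hBnddef
  set U : Set (ℝ × (Fin n → ℝ)) := (Ioi (0:ℝ)) ×ˢ D with hUdef
  have hUopen : IsOpen U := isOpen_Ioi.prod hD
  have hmemU : ∀ z : ℝ × (Fin n → ℝ), z ∈ U ↔ 0 < z.1 ∧ z.2 ∈ D := fun z => Iff.rfl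
  have hηU : ContinuousOn (fun z : ℝ × (Fin n → ℝ) => η z.2) U :=
    hηcont.comp continuous_snd.continuousOn (fun z hz => ((hmemU z).1 hz).2)
  have hfU : ContinuousOn (fun z : ℝ × (Fin n → ℝ) => z.1 / η z.2) U :=
    continuous_fst.continuousOn.div hηU (fun z hz => (hη z.2 ((hmemU z).1 hz).2).1.ne')
  have hΩopen : ∀ a : ℝ, 0 ≤ a →
      IsOpen {z : ℝ × (Fin n → ℝ) | z.2 ∈ D ∧ a < z.1 ∧ z.1 / η z.2 < fstar} := by
    intro a ha
    have h1 : IsOpen ((Ioi a ×ˢ D) : Set (ℝ × (Fin n → ℝ))) := isOpen_Ioi.prod hD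
    have hsub : ((Ioi a ×ˢ D) : Set (ℝ × (Fin n → ℝ))) ⊆ U := fun z hz =>
      ⟨lt_of_le_of_lt ha hz.1, hz.2⟩
    have h2 : IsOpen ((Ioi a ×ˢ D) ∩ (fun z : ℝ × (Fin n → ℝ) => z.1 / η z.2) ⁻¹' (Iio fstar)) :=
      (hfU.mono hsub).isOpen_inter_preimage h1 isOpen_Iio
    convert h2 using 1
    ext z
    simp only [Set.mem_setOf_eq, Set.mem_inter_iff, Set.mem_prod, Set.mem_preimage,
      Set.mem_Ioi, Set.mem_Iio]
    tauto
  have hexpU : ContinuousOn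
      (fun z : ℝ × (Fin n → ℝ) => Real.exp (-(lam * (z.1 / η z.2) ^ p / p))) U :=
    Real.continuous_exp.comp_continuousOn
      (((continuousOn_const.mul (hfU.rpow_const (fun z _ => Or.inr hp.le))).div_const p).neg)
  have hfpow : ∀ q : ℝ, ContinuousOn (fun z : ℝ × (Fin n → ℝ) => (z.1 / η z.2) ^ q) U :=
    fun q => hfU.rpow_const (fun z hz =>
      Or.inl (div_pos ((hmemU z).1 hz).1 (hη z.2 ((hmemU z).1 hz).2).1).ne')
  have hzpow : ∀ q : ℝ, ContinuousOn (fun z : ℝ × (Fin n → ℝ) => z.1 ^ q) U :=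
    fun q => continuous_fst.continuousOn.rpow_const
      (fun z hz => Or.inl (((hmemU z).1 hz).1).ne')
  have hI₁cont : ContinuousOn I₁ U := by
    rw [hI₁def]
    exact ENNReal.continuous_ofReal.comp_continuousOn
      (((hexpU.mul (hfpow _)).mul (hzpow _)).mul (hΨcont.norm.pow 2))
  -- measurability of the derivative
  have hdmeas : AEMeasurable (fun z : ℝ × (Fin n → ℝ) => deriv (fun t => Ψ (t, z.2)) z.1)
      (volume.restrict U) := by
    have hgk : ∀ k : ℕ, ContinuousOn
        (fun z : ℝ × (Fin n → ℝ) => ((k:ℝ)+1) • (Ψ (z.1 + 1/((k:ℝ)+1), z.2) - Ψ z)) U := by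
      intro k
      refine ContinuousOn.const_smul (g := fun z : ℝ × (Fin n → ℝ) => Ψ (z.1 + 1/((k:ℝ)+1), z.2) - Ψ z) ?_ ((k:ℝ)+1)
      apply ContinuousOn.sub _ hΨcont
      apply hΨcont.comp ((continuous_fst.add continuous_const).prodMk continuous_snd).continuousOn
      intro z hz
      have h1 : (0:ℝ) < 1/((k:ℝ)+1) := by positivity
      exact (hmemU _).2 ⟨by have := ((hmemU z).1 hz).1; simp only [Pi.add_apply]; linarith,
        ((hmemU z).1 hz).2⟩
    have htend : ∀ z ∈ U, Tendsto (fun k : ℕ => ((k:ℝ)+1) • (Ψ (z.1 + 1/((k:ℝ)+1), z.2) - Ψ z))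
        atTop (nhds (deriv (fun t => Ψ (t, z.2)) z.1)) := by
      intro z hz
      have hd := hΨdiff z.2 ((hmemU z).1 hz).2 z.1 ((hmemU z).1 hz).1
      have hslope := hasDerivAt_iff_tendsto_slope.1 hd
      have hseq : Tendsto (fun k : ℕ => z.1 + 1/((k:ℝ)+1)) atTop (nhdsWithin z.1 {z.1}ᶜ) := by
        apply tendsto_nhdsWithin_of_tendsto_nhds_of_eventually_within
        · have := tendsto_one_div_add_atTop_nhds_zero_nat (𝕜 := ℝ)
          have h2 := this.const_add z.1
          simpa using h2
        · apply Eventually.of_forall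
          intro k
          have h1 : (0:ℝ) < 1/((k:ℝ)+1) := by positivity
          simp only [Set.mem_compl_iff, Set.mem_singleton_iff]
          intro h
          nlinarith [congrArg (fun r : ℝ => r - z.1) h]
      have h3 := hslope.comp hseq
      apply h3.congr
      intro k
      have h1 : (0:ℝ) < 1/((k:ℝ)+1) := by positivity
      show slope (fun t => Ψ (t, z.2)) z.1 (z.1 + 1/((k:ℝ)+1)) = _
      rw [slope_def_module]
      congr 1
      rw [show z.1 + 1/((k:ℝ)+1) - z.1 = 1/((k:ℝ)+1) by ring, one_div, inv_inv]
    exact aemeasurable_of_tendsto_metrizable_ae'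
      (fun k => ((hgk k).aemeasurable hUopen.measurableSet))
      ((ae_restrict_iff' hUopen.measurableSet).2 (ae_of_all _ htend))
  have hI₂meas : AEMeasurable I₂ (volume.restrict U) := by
    have hW₂ : ContinuousOn (fun z : ℝ × (Fin n → ℝ) =>
        Real.exp (-(lam * (z.1 / η z.2) ^ p / p)) *
          (z.1 / η z.2) ^ ((n : ℝ) - 2 - p - 2 * κ) * z.1 ^ (s - (n : ℝ) + 1)) U :=
      (hexpU.mul (hfpow _)).mul (hzpow _)
    have h1 : AEMeasurable (fun z : ℝ × (Fin n → ℝ) =>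
        ENNReal.ofReal (Real.exp (-(lam * (z.1 / η z.2) ^ p / p)) *
          (z.1 / η z.2) ^ ((n : ℝ) - 2 - p - 2 * κ) * z.1 ^ (s - (n : ℝ) + 1)) *
        ENNReal.ofReal (‖deriv (fun t => Ψ (t, z.2)) z.1‖ ^ 2)) (volume.restrict U) := by
      apply AEMeasurable.fun_mul
      · exact (ENNReal.continuous_ofReal.comp_continuousOn hW₂).aemeasurable
          hUopen.measurableSet
      · exact ((ENNReal.continuous_ofReal.comp
          ((continuous_norm.pow 2 : Continuous fun v : EuclideanSpace ℝ (Fin d) => ‖v‖ ^ 2)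
            )).measurable).comp_aemeasurable hdmeas
    apply h1.congr
    apply (ae_restrict_iff' hUopen.measurableSet).2
    apply ae_of_all
    intro z hz
    have h0 : (0:ℝ) < z.1 := ((hmemU z).1 hz).1
    have hη0 : (0:ℝ) < η z.2 := (hη z.2 ((hmemU z).1 hz).2).1
    have hnn : 0 ≤ Real.exp (-(lam * (z.1 / η z.2) ^ p / p)) *
        (z.1 / η z.2) ^ ((n : ℝ) - 2 - p - 2 * κ) * z.1 ^ (s - (n : ℝ) + 1) := by
      apply mul_nonneg (mul_nonneg (Real.exp_pos _).le
        (Real.rpow_nonneg (div_pos h0 hη0).le _)) (Real.rpow_nonneg h0.le _)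
    rw [hI₂def]
    simp only
    rw [ENNReal.ofReal_mul hnn]
  -- Tonelli
  have htonelli : ∀ (a : ℝ), 0 ≤ a → ∀ (I : ℝ × (Fin n → ℝ) → ℝ≥0∞),
      AEMeasurable I (volume.restrict {z : ℝ × (Fin n → ℝ) | z.2 ∈ D ∧ a < z.1 ∧ z.1 / η z.2 < fstar}) →
      (∫⁻ z in {z : ℝ × (Fin n → ℝ) | z.2 ∈ D ∧ a < z.1 ∧ z.1 / η z.2 < fstar}, I z)
        = ∫⁻ x, D.indicator (fun x => ∫⁻ ρ in Ioo a (fstar * η x), I (ρ, x)) x := by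
    intro a ha I hI
    have hΩa := hΩopen a ha
    have hind : AEMeasurable
        ({z : ℝ × (Fin n → ℝ) | z.2 ∈ D ∧ a < z.1 ∧ z.1 / η z.2 < fstar}.indicator I)
        ((volume : Measure ℝ).prod (volume : Measure (Fin n → ℝ))) := by
      rw [← Measure.volume_eq_prod]
      exact (aemeasurable_indicator_iff hΩa.measurableSet).2 hI
    rw [← lintegral_indicator hΩa.measurableSet, Measure.volume_eq_prod, lintegral_prod_symm _ hind]
    apply lintegral_congr
    intro x
    by_cases hx : x ∈ D
    · rw [Set.indicator_of_mem hx]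
      have hslice : ∀ ρ : ℝ,
          ({z : ℝ × (Fin n → ℝ) | z.2 ∈ D ∧ a < z.1 ∧ z.1 / η z.2 < fstar}.indicator I) (ρ, x)
            = (Ioo a (fstar * η x)).indicator (fun ρ => I (ρ, x)) ρ := by
        intro ρ
        by_cases hρ : ρ ∈ Ioo a (fstar * η x)
        · rw [Set.indicator_of_mem hρ, Set.indicator_of_mem]
          exact ⟨hx, hρ.1, (div_lt_iff₀ (hη x hx).1).2 hρ.2⟩
        · rw [Set.indicator_of_notMem hρ, Set.indicator_of_notMem]
          intro hmem
          exact hρ ⟨hmem.2.1, (div_lt_iff₀ (hη x hx).1).1 hmem.2.2⟩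
      simp_rw [hslice]
      exact lintegral_indicator measurableSet_Ioo _
    · rw [Set.indicator_of_notMem hx]
      have hz : ∀ ρ : ℝ,
          ({z : ℝ × (Fin n → ℝ) | z.2 ∈ D ∧ a < z.1 ∧ z.1 / η z.2 < fstar}.indicator I) (ρ, x) = 0 :=
        fun ρ => Set.indicator_of_notMem (fun h => hx h.1) I
      simp_rw [hz]
      exact lintegral_zero
  -- boundary set openness
  have hDaopen : ∀ a : ℝ, IsOpen {x : Fin n → ℝ | x ∈ D ∧ a < fstar * η x} := by
    intro a
    have h2 : IsOpen (D ∩ (fun x => fstar * η x) ⁻¹' (Ioi a)) :=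
      (continuousOn_const.mul hηcont).isOpen_inter_preimage hD isOpen_Ioi
    convert h2 using 1
    rfl
  -- Claim A : the main per-slab estimate
  have claimA : ∀ a : ℝ, 0 < a →
      ENNReal.ofReal ((2 * κ + 2 - s) * lam) *
        (∫⁻ z in {z : ℝ × (Fin n → ℝ) | z.2 ∈ D ∧ a < z.1 ∧ z.1 / η z.2 < fstar}, I₁ z)
      ≤ (∫⁻ z in {z : ℝ × (Fin n → ℝ) | z.2 ∈ D ∧ 0 < z.1 ∧ z.1 / η z.2 < fstar}, I₂ z)
        + ENNReal.ofReal lam * ENNReal.ofReal (H ^ (2 * κ + 2 - (n : ℝ))) * Bnd a := by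
    intro a ha
    have hsubU : {z : ℝ × (Fin n → ℝ) | z.2 ∈ D ∧ a < z.1 ∧ z.1 / η z.2 < fstar} ⊆ U :=
      fun z hz => (hmemU z).2 ⟨lt_trans ha hz.2.1, hz.1⟩
    have hΩsubU : {z : ℝ × (Fin n → ℝ) | z.2 ∈ D ∧ 0 < z.1 ∧ z.1 / η z.2 < fstar} ⊆ U :=
      fun z hz => (hmemU z).2 ⟨hz.2.1, hz.1⟩
    have hI₁a : AEMeasurable I₁
        (volume.restrict {z : ℝ × (Fin n → ℝ) | z.2 ∈ D ∧ a < z.1 ∧ z.1 / η z.2 < fstar}) :=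
      (hI₁cont.aemeasurable hUopen.measurableSet).mono_measure
        (Measure.restrict_mono hsubU le_rfl)
    have hI₂a : AEMeasurable I₂
        (volume.restrict {z : ℝ × (Fin n → ℝ) | z.2 ∈ D ∧ 0 < z.1 ∧ z.1 / η z.2 < fstar}) :=
      hI₂meas.mono_measure (Measure.restrict_mono hΩsubU le_rfl)
    rw [htonelli a ha.le I₁ hI₁a, htonelli 0 le_rfl I₂ hI₂a,
      ← lintegral_const_mul' _ _ ENNReal.ofReal_ne_top]
    -- rewrite the boundary term as an integral of an indicator
    have hbmeas : AEMeasurable (fun x => ({x : Fin n → ℝ | x ∈ D ∧ a < fstar * η x}).indicator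
        (fun x => ENNReal.ofReal (lam * H ^ (2 * κ + 2 - (n : ℝ))) *
          ENNReal.ofReal (a ^ (s - 2 * κ - 2) * ‖Ψ (a, x)‖ ^ 2)) x) volume := by
      apply (aemeasurable_indicator_iff (hDaopen a).measurableSet).2
      apply AEMeasurable.const_mul
      apply ContinuousOn.aemeasurable _ (hDaopen a).measurableSet
      apply ENNReal.continuous_ofReal.comp_continuousOn
      apply continuousOn_const.mul
      apply ContinuousOn.pow
      apply ContinuousOn.norm
      apply hΨcont.comp ((continuous_const.prodMk continuous_id).continuousOn)
      intro x hx
      exact (hmemU _).2 ⟨ha, hx.1⟩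
    have hBeq : ENNReal.ofReal lam * ENNReal.ofReal (H ^ (2 * κ + 2 - (n : ℝ))) * Bnd a
        = ∫⁻ x, ({x : Fin n → ℝ | x ∈ D ∧ a < fstar * η x}).indicator
            (fun x => ENNReal.ofReal (lam * H ^ (2 * κ + 2 - (n : ℝ))) *
              ENNReal.ofReal (a ^ (s - 2 * κ - 2) * ‖Ψ (a, x)‖ ^ 2)) x := by
      rw [lintegral_indicator (hDaopen a).measurableSet,
        lintegral_const_mul' _ _ ENNReal.ofReal_ne_top, ENNReal.ofReal_mul hlam.le, hBnddef]
    rw [hBeq, ← lintegral_add_right' _ hbmeas]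
    apply lintegral_mono
    intro x
    simp only
    by_cases hx : x ∈ D
    · rw [Set.indicator_of_mem hx, Set.indicator_of_mem hx]
      by_cases hax : a < fstar * η x
      · rw [Set.indicator_of_mem (show x ∈ {x : Fin n → ℝ | x ∈ D ∧ a < fstar * η x} from ⟨hx, hax⟩)]
        have hcψ : ContinuousOn (fun t => Ψ (t, x)) (Ioi 0) := by
          apply hΨcont.comp ((continuous_id.prodMk continuous_const).continuousOn)
          intro t ht
          exact (hmemU _).2 ⟨ht, hx⟩
        have h1 := onedim (fun t => Ψ (t, x)) (fun t => deriv (fun t => Ψ (t, x)) t)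
          hcψ (fun t ht => hΨdiff x hx t ht) (hΨdcont x hx) n s κ lam p H (η x) a (fstar * η x)
          hκ hC hlam hp (hη x hx).1 (hη x hx).2 ha hax
        refine le_trans h1 (add_le_add ?_ le_rfl)
        apply lintegral_mono_set
        intro t ht
        exact ⟨lt_trans ha ht.1, ht.2⟩
      · rw [Ioo_eq_empty hax, Measure.restrict_empty, lintegral_zero_measure, mul_zero]
        exact zero_le
    · rw [Set.indicator_of_notMem hx, Set.indicator_of_notMem hx, mul_zero]
      exact zero_le
  -- supremum step: exhaust Ω by slabs
  have hI₁m : ∀ m : ℕ, AEMeasurable I₁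
      (volume.restrict {z : ℝ × (Fin n → ℝ) | z.2 ∈ D ∧ 1/((m:ℝ)+1) < z.1 ∧ z.1 / η z.2 < fstar}) := by
    intro m
    have hsubU : {z : ℝ × (Fin n → ℝ) | z.2 ∈ D ∧ 1/((m:ℝ)+1) < z.1 ∧ z.1 / η z.2 < fstar} ⊆ U := by
      intro z hz
      have h1 : (0:ℝ) < 1/((m:ℝ)+1) := by positivity
      exact (hmemU z).2 ⟨lt_trans h1 hz.2.1, hz.1⟩
    exact (hI₁cont.aemeasurable hUopen.measurableSet).mono_measure
      (Measure.restrict_mono hsubU le_rfl)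
  have hsup : (∫⁻ z in {z : ℝ × (Fin n → ℝ) | z.2 ∈ D ∧ 0 < z.1 ∧ z.1 / η z.2 < fstar}, I₁ z)
      = ⨆ m : ℕ, ∫⁻ z in {z : ℝ × (Fin n → ℝ) | z.2 ∈ D ∧ 1/((m:ℝ)+1) < z.1 ∧ z.1 / η z.2 < fstar}, I₁ z := by
    have hmono : Monotone (fun m : ℕ =>
        {z : ℝ × (Fin n → ℝ) | z.2 ∈ D ∧ 1/((m:ℝ)+1) < z.1 ∧ z.1 / η z.2 < fstar}) := by
      intro m m' hmm' z hz
      refine ⟨hz.1, lt_of_le_of_lt ?_ hz.2.1, hz.2.2⟩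
      have h1 : (m:ℝ) ≤ (m':ℝ) := Nat.cast_le.2 hmm'
      apply one_div_le_one_div_of_le (by positivity)
      linarith
    have hU2 : (⋃ m : ℕ, {z : ℝ × (Fin n → ℝ) | z.2 ∈ D ∧ 1/((m:ℝ)+1) < z.1 ∧ z.1 / η z.2 < fstar})
        = {z : ℝ × (Fin n → ℝ) | z.2 ∈ D ∧ 0 < z.1 ∧ z.1 / η z.2 < fstar} := by
      ext z
      simp only [mem_iUnion, mem_setOf_eq]
      constructor
      · rintro ⟨m, hm⟩
        have h1 : (0:ℝ) < 1/((m:ℝ)+1) := by positivity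
        exact ⟨hm.1, lt_trans h1 hm.2.1, hm.2.2⟩
      · rintro ⟨h1, h2, h3⟩
        obtain ⟨m, hm⟩ := exists_nat_one_div_lt h2
        exact ⟨m, h1, hm, h3⟩
    rw [← hU2, lintegral_iUnion_mono_sets volume hmono
      (fun m => (hΩopen _ (by positivity)).measurableSet) hI₁m]
  -- conclusion via the limsup
  set cB : ℝ≥0∞ := ENNReal.ofReal lam * ENNReal.ofReal (H ^ (2 * κ + 2 - (n : ℝ))) with hcBdef
  set Λ : ℝ≥0∞ := Filter.limsup Bnd (nhdsWithin 0 (Ioi 0)) with hΛdef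
  set Main : ℝ≥0∞ :=
    ∫⁻ z in {z : ℝ × (Fin n → ℝ) | z.2 ∈ D ∧ 0 < z.1 ∧ z.1 / η z.2 < fstar}, I₂ z with hMaindef
  show ENNReal.ofReal ((2 * κ + 2 - s) * lam) *
      (∫⁻ z in {z : ℝ × (Fin n → ℝ) | z.2 ∈ D ∧ 0 < z.1 ∧ z.1 / η z.2 < fstar}, I₁ z)
    ≤ Main + cB * Λ
  have hkey : ∀ b : ℝ≥0∞, Λ < b →
      ENNReal.ofReal ((2 * κ + 2 - s) * lam) *
        (∫⁻ z in {z : ℝ × (Fin n → ℝ) | z.2 ∈ D ∧ 0 < z.1 ∧ z.1 / η z.2 < fstar}, I₁ z)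
      ≤ Main + cB * b := by
    intro b hb
    have hev : ∀ᶠ ρs in nhdsWithin (0:ℝ) (Ioi 0), Bnd ρs < b :=
      Filter.eventually_lt_of_limsup_lt hb
    rw [hsup, ENNReal.mul_iSup]
    apply iSup_le
    intro m
    have hδ : (0:ℝ) < 1/((m:ℝ)+1) := by positivity
    have hev2 : ∀ᶠ ρs in nhdsWithin (0:ℝ) (Ioi 0), ρs < 1/((m:ℝ)+1) :=
      eventually_of_mem (mem_nhdsWithin_of_mem_nhds (Iio_mem_nhds hδ)) (fun x hx => hx)
    have hev3 : ∀ᶠ ρs in nhdsWithin (0:ℝ) (Ioi 0), ρs ∈ Ioi (0:ℝ) :=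
      eventually_mem_nhdsWithin
    obtain ⟨a, ⟨hBa, haδ⟩, ha0⟩ := ((hev.and hev2).and hev3).exists
    have hsubset : {z : ℝ × (Fin n → ℝ) | z.2 ∈ D ∧ 1/((m:ℝ)+1) < z.1 ∧ z.1 / η z.2 < fstar}
        ⊆ {z : ℝ × (Fin n → ℝ) | z.2 ∈ D ∧ a < z.1 ∧ z.1 / η z.2 < fstar} :=
      fun z hz => ⟨hz.1, lt_trans haδ hz.2.1, hz.2.2⟩
    calc ENNReal.ofReal ((2 * κ + 2 - s) * lam) *
          (∫⁻ z in {z : ℝ × (Fin n → ℝ) | z.2 ∈ D ∧ 1/((m:ℝ)+1) < z.1 ∧ z.1 / η z.2 < fstar}, I₁ z)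
        ≤ ENNReal.ofReal ((2 * κ + 2 - s) * lam) *
          (∫⁻ z in {z : ℝ × (Fin n → ℝ) | z.2 ∈ D ∧ a < z.1 ∧ z.1 / η z.2 < fstar}, I₁ z) :=
          mul_le_mul_right (lintegral_mono_set hsubset) _
      _ ≤ Main + cB * Bnd a := claimA a ha0
      _ ≤ Main + cB * b := add_le_add_right (mul_le_mul_right hBa.le _) _
  by_cases hΛtop : cB * Λ = ⊤
  · have h1 : Main + cB * Λ = ⊤ := by rw [hΛtop, add_top]
    rw [h1]
    exact le_top
  · have hcB0 : cB ≠ 0 := by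
      rw [hcBdef]
      have h1 : (0:ℝ≥0∞) < ENNReal.ofReal lam := ENNReal.ofReal_pos.2 hlam
      have h2 : (0:ℝ≥0∞) < ENNReal.ofReal (H ^ (2 * κ + 2 - (n : ℝ))) :=
        ENNReal.ofReal_pos.2 (Real.rpow_pos_of_pos hH _)
      exact mul_ne_zero h1.ne' h2.ne'
    have hcBt : cB ≠ ⊤ := ENNReal.mul_ne_top ENNReal.ofReal_ne_top ENNReal.ofReal_ne_top
    have hΛt : Λ ≠ ⊤ := by
      intro h
      rw [h] at hΛtop
      exact hΛtop (ENNReal.mul_top hcB0)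
    apply ENNReal.le_of_forall_pos_le_add
    intro ε hε hlt
    have hεne : ((ε:ℝ≥0∞)) ≠ 0 := by exact_mod_cast hε.ne'
    have hdivne : (ε:ℝ≥0∞) / cB ≠ 0 := by
      simp only [ne_eq, ENNReal.div_eq_zero_iff, not_or]
      exact ⟨hεne, hcBt⟩
    have hb : Λ < Λ + (ε:ℝ≥0∞) / cB := ENNReal.lt_add_right hΛt hdivne
    refine le_trans (hkey _ hb) ?_
    rw [mul_add, ← add_assoc]
    apply add_le_add_right
    exact ENNReal.mul_div_le

end
end

section
/- Let d ≥ 1 be an integer, let n, κ, s be real constants, let η, λ, p > 0, and let 0 < ρ⁎ ≤ ρ°. Let ψ : [ρ⁎, ρ°] → ℝ^d be continuously differentiable, and write f(ρ) := ρ/η. Then λ·(2κ+2−s) · ∫_{ρ⁎}^{ρ°} e^{−λ f(ρ)^p/p} f(ρ)^{n−2−2κ} ρ^{s−n−1} |ψ(ρ)|² dρ ≤ λ · e^{−λ f(ρ⁎)^p/p} f(ρ⁎)^{n−2−2κ} ρ⁎^{s−n} |ψ(ρ⁎)|² + ∫_{ρ⁎}^{ρ°} e^{−λ f(ρ)^p/p}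 f(ρ)^{n−2−p−2κ} ρ^{s−n+1} |ψ′(ρ)|² dρ. -/
open Set Real intervalIntegral

noncomputable section

/-- **Fiberwise transport Carleman estimate** (core of the proof of Proposition 4.2):
for a `C¹` curve `ψ` on `[ρ⁎, ρ°]`, with `f(ρ) = ρ/η` and the Carleman weight
`e^{−λ f^p/p} f^{n−2−2κ} ρ^{s−n}`, the weighted `L²` norm of `ψ` is controlled by the
weighted `L²` norm of `ψ′` plus a boundary term at `ρ = ρ⁎`. -/
theorem transport_carleman_fiber
    {d : ℕ} (hd : 1 ≤ d) (n κ s η lam p ρs ρe : ℝ)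
    (hη : 0 < η) (hlam : 0 < lam) (hp : 0 < p) (hρs : 0 < ρs) (hle : ρs ≤ ρe)
    (ψ ψ' : ℝ → EuclideanSpace ℝ (Fin d))
    (hderiv : ∀ ρ ∈ Icc ρs ρe, HasDerivWithinAt ψ (ψ' ρ) (Icc ρs ρe) ρ)
    (hcont : ContinuousOn ψ' (Icc ρs ρe)) :
    lam * (2 * κ + 2 - s) *
      (∫ ρ in ρs..ρe, Real.exp (-(lam * (ρ / η) ^ p / p)) * (ρ / η) ^ (n - 2 - 2 * κ) *
        ρ ^ (s - n - 1) * ‖ψ ρ‖ ^ 2)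
    ≤ lam * Real.exp (-(lam * (ρs / η) ^ p / p)) * (ρs / η) ^ (n - 2 - 2 * κ) *
        ρs ^ (s - n) * ‖ψ ρs‖ ^ 2
      + ∫ ρ in ρs..ρe, Real.exp (-(lam * (ρ / η) ^ p / p)) *
          (ρ / η) ^ (n - 2 - p - 2 * κ) * ρ ^ (s - n + 1) * ‖ψ' ρ‖ ^ 2 := by
  set a : ℝ := n - 2 - 2 * κ with ha
  set b : ℝ := s - n with hb
  set w : ℝ → ℝ := fun ρ => Real.exp (-(lam * (ρ / η) ^ p / p)) * (ρ / η) ^ a * ρ ^ b with hw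
  set g : ℝ → ℝ := fun ρ => w ρ * ‖ψ ρ‖ ^ 2 with hg
  set G : ℝ → ℝ := fun ρ => w ρ *
      ((((s - 2 - 2 * κ) - lam * (ρ / η) ^ p) / ρ) * ‖ψ ρ‖ ^ 2
        + 2 * (inner ℝ (ψ ρ) (ψ' ρ) : ℝ)) with hG
  have hwpos : ∀ ρ > (0:ℝ), 0 < w ρ := by
    intro ρ hρ
    exact mul_pos (mul_pos (Real.exp_pos _) (Real.rpow_pos_of_pos (div_pos hρ hη) _))
      (Real.rpow_pos_of_pos hρ _)
  -- derivative of w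
  have hw' : ∀ ρ > (0:ℝ), HasDerivAt w
      (w ρ * (((s - 2 - 2 * κ) - lam * (ρ / η) ^ p) / ρ)) ρ := by
    intro ρ hρ
    have hf0 : 0 < ρ / η := div_pos hρ hη
    have hdivη : HasDerivAt (fun x : ℝ => x / η) (1 / η) ρ := by
      simpa using (hasDerivAt_id ρ).div_const η
    have h3 : HasDerivAt (fun x : ℝ => (x / η) ^ p) (p * (ρ / η) ^ (p - 1) * (1 / η)) ρ :=
      by have := (Real.hasDerivAt_rpow_const (x := ρ / η) (p := p) (Or.inl hf0.ne')).comp ρ hdivη; exact this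
    have h1 : HasDerivAt (fun x : ℝ => Real.exp (-(lam * (x / η) ^ p / p)))
        (Real.exp (-(lam * (ρ / η) ^ p / p)) * (-(lam * (p * (ρ / η) ^ (p - 1) * (1 / η)) / p))) ρ :=
      (((h3.const_mul lam).div_const p).neg).exp
    have h2 : HasDerivAt (fun x : ℝ => (x / η) ^ a) (a * (ρ / η) ^ (a - 1) * (1 / η)) ρ :=
      by have := (Real.hasDerivAt_rpow_const (x := ρ / η) (p := a) (Or.inl hf0.ne')).comp ρ hdivη; exact this
    have h4 : HasDerivAt (fun x : ℝ => x ^ b) (b * ρ ^ (b - 1)) ρ :=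
      Real.hasDerivAt_rpow_const (Or.inl hρ.ne')
    have key := (h1.mul h2).mul h4
    refine key.congr_deriv ?_
    have e1 : (ρ / η) ^ (p - 1) * (1 / η) = (ρ / η) ^ p / ρ := by
      rw [Real.rpow_sub hf0, Real.rpow_one]; field_simp
    have e2 : (ρ / η) ^ (a - 1) * (1 / η) = (ρ / η) ^ a / ρ := by
      rw [Real.rpow_sub hf0, Real.rpow_one]; field_simp
    have e3 : ρ ^ (b - 1) = ρ ^ b / ρ := by
      rw [Real.rpow_sub hρ, Real.rpow_one]
    rw [mul_assoc p, e1, mul_assoc a, e2, e3, hw]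
    have hab : (s - 2 - 2 * κ) = a + b := by rw [ha, hb]; ring
    rw [hab]; simp only [Pi.mul_apply]; field_simp
    ring
  -- continuity of ψ and w on Icc
  have hψc : ContinuousOn ψ (Icc ρs ρe) := fun ρ hρ => (hderiv ρ hρ).continuousWithinAt
  have hρpos : ∀ ρ ∈ Icc ρs ρe, (0:ℝ) < ρ := fun ρ hρ => lt_of_lt_of_le hρs hρ.1
  have hwc : ContinuousOn w (Icc ρs ρe) := fun ρ hρ =>
    ((hw' ρ (hρpos ρ hρ)).continuousAt).continuousWithinAt
  -- derivative of g within Icc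
  have hgd : ∀ ρ ∈ Icc ρs ρe, HasDerivWithinAt g (G ρ) (Icc ρs ρe) ρ := by
    intro ρ hρ
    have hn : HasDerivWithinAt (fun x => ‖ψ x‖ ^ 2)
        (2 * (inner ℝ (ψ ρ) (ψ' ρ) : ℝ)) (Icc ρs ρe) ρ := by
      have := (hderiv ρ hρ).inner ℝ (hderiv ρ hρ)
      have heq : (fun x => ‖ψ x‖ ^ 2) = fun x => (inner ℝ (ψ x) (ψ x) : ℝ) := by
        funext x; rw [real_inner_self_eq_norm_sq]
      rw [heq]
      refine this.congr_deriv ?_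
      rw [real_inner_comm]; ring
    have := ((hw' ρ (hρpos ρ hρ)).hasDerivWithinAt).mul hn
    refine this.congr_deriv ?_
    simp only [hG]; ring
  -- FTC
  have hGc : ContinuousOn G (Icc ρs ρe) := by
    apply hwc.mul
    apply ContinuousOn.add
    · apply ContinuousOn.mul
      · apply ContinuousOn.div
        · apply ContinuousOn.sub continuousOn_const
          apply ContinuousOn.mul continuousOn_const
          apply ContinuousOn.rpow_const
          · exact (continuousOn_id.div_const η)
          · exact fun ρ hρ => Or.inl (div_pos (hρpos ρ hρ) hη).ne'
        · exact continuousOn_id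
        · exact fun ρ hρ => (hρpos ρ hρ).ne'
      · exact (hψc.norm.pow 2)
    · exact continuousOn_const.mul (hψc.inner hcont)
  have hGint : IntervalIntegrable G MeasureTheory.volume ρs ρe := by
    apply ContinuousOn.intervalIntegrable
    rwa [uIcc_of_le hle]
  have hgc : ContinuousOn g (Icc ρs ρe) := hwc.mul (hψc.norm.pow 2)
  have hFTC : ∫ ρ in ρs..ρe, G ρ = g ρe - g ρs := by
    apply integral_eq_sub_of_hasDeriv_right_of_le hle hgc _ hGint
    intro x hx
    have hxI : x ∈ Icc ρs ρe := Ioo_subset_Icc_self hx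
    refine (hgd x hxI).mono_of_mem_nhdsWithin ?_
    exact Icc_mem_nhdsGT_of_mem ⟨le_of_lt hx.1, hx.2⟩
  -- pointwise inequality
  set L : ℝ → ℝ := fun ρ => Real.exp (-(lam * (ρ / η) ^ p / p)) * (ρ / η) ^ a *
      ρ ^ (s - n - 1) * ‖ψ ρ‖ ^ 2 with hL
  set R : ℝ → ℝ := fun ρ => Real.exp (-(lam * (ρ / η) ^ p / p)) *
      (ρ / η) ^ (n - 2 - p - 2 * κ) * ρ ^ (s - n + 1) * ‖ψ' ρ‖ ^ 2 with hR
  have hpt : ∀ ρ ∈ Icc ρs ρe,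
      lam * (2 * κ + 2 - s) * L ρ ≤ -(lam * G ρ) + R ρ := by
    intro ρ hρ
    have hρ0 := hρpos ρ hρ
    have hf0 : 0 < ρ / η := div_pos hρ0 hη
    have hfp : 0 < (ρ / η) ^ p := Real.rpow_pos_of_pos hf0 p
    have hwp := hwpos ρ hρ0
    -- express L and R via w
    have hLw : L ρ = w ρ / ρ * ‖ψ ρ‖ ^ 2 := by
      simp only [hL, hw]
      rw [show s - n - 1 = b - 1 by rw [hb], Real.rpow_sub hρ0, Real.rpow_one]
      ring
    have hRw : R ρ = w ρ * ρ / (ρ / η) ^ p * ‖ψ' ρ‖ ^ 2 := by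
      simp only [hR, hw]
      rw [show n - 2 - p - 2 * κ = a - p by rw [ha]; ring, Real.rpow_sub hf0,
        show s - n + 1 = b + 1 by rw [hb], Real.rpow_add hρ0, Real.rpow_one]
      ring
    rw [hLw, hRw, hG]
    have hinner : (inner ℝ (ψ ρ) (ψ' ρ) : ℝ) ≤ ‖ψ ρ‖ * ‖ψ' ρ‖ := real_inner_le_norm _ _
    have hCS : 2 * lam * (‖ψ ρ‖ * ‖ψ' ρ‖) ≤
        lam ^ 2 * ((ρ / η) ^ p / ρ) * ‖ψ ρ‖ ^ 2 + ρ / (ρ / η) ^ p * ‖ψ' ρ‖ ^ 2 := by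
      set c : ℝ := (ρ / η) ^ p / ρ with hc
      have hc0 : 0 < c := div_pos hfp hρ0
      have hcc : ρ / (ρ / η) ^ p = c⁻¹ := by
        rw [hc]; field_simp
      rw [hcc]
      have h := sq_nonneg (lam * c * ‖ψ ρ‖ - ‖ψ' ρ‖)
      have h2 : 0 ≤ (lam * c * ‖ψ ρ‖ - ‖ψ' ρ‖) ^ 2 / c := div_nonneg h hc0.le
      have : (lam * c * ‖ψ ρ‖ - ‖ψ' ρ‖) ^ 2 / c =
          lam ^ 2 * c * ‖ψ ρ‖ ^ 2 - 2 * lam * (‖ψ ρ‖ * ‖ψ' ρ‖) + c⁻¹ * ‖ψ' ρ‖ ^ 2 := by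
        field_simp
        ring
      linarith [this ▸ h2]
    -- main algebra
    have hsplit : -(lam * (w ρ * ((((s - 2 - 2 * κ) - lam * (ρ / η) ^ p) / ρ) * ‖ψ ρ‖ ^ 2
        + 2 * (inner ℝ (ψ ρ) (ψ' ρ) : ℝ)))) + w ρ * ρ / (ρ / η) ^ p * ‖ψ' ρ‖ ^ 2
        - lam * (2 * κ + 2 - s) * (w ρ / ρ * ‖ψ ρ‖ ^ 2)
        = w ρ * (lam ^ 2 * ((ρ / η) ^ p / ρ) * ‖ψ ρ‖ ^ 2 + ρ / (ρ / η) ^ p * ‖ψ' ρ‖ ^ 2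
            - 2 * lam * (inner ℝ (ψ ρ) (ψ' ρ) : ℝ)) := by
      field_simp
      ring
    have h2l := mul_le_mul_of_nonneg_left hinner (by positivity : (0:ℝ) ≤ 2 * lam)
    have hbr : 0 ≤ lam ^ 2 * ((ρ / η) ^ p / ρ) * ‖ψ ρ‖ ^ 2 + ρ / (ρ / η) ^ p * ‖ψ' ρ‖ ^ 2
        - 2 * lam * (inner ℝ (ψ ρ) (ψ' ρ) : ℝ) := by linarith
    have hfin := mul_nonneg hwp.le hbr
    linarith [hsplit ▸ hfin]
  -- integrability of L and R
  have hbasec : ∀ (r q : ℝ), ContinuousOn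
      (fun ρ : ℝ => Real.exp (-(lam * (ρ / η) ^ p / p)) * (ρ / η) ^ r * ρ ^ q) (Icc ρs ρe) := by
    intro r q
    have h1 : ContinuousOn (fun ρ : ℝ => ρ / η) (Icc ρs ρe) := continuousOn_id.div_const η
    have hne : ∀ ρ ∈ Icc ρs ρe, ρ / η ≠ 0 ∨ (0:ℝ) ≤ r :=
      fun ρ hρ => Or.inl (div_pos (hρpos ρ hρ) hη).ne'
    have hne2 : ∀ ρ ∈ Icc ρs ρe, ρ / η ≠ 0 ∨ (0:ℝ) ≤ p :=
      fun ρ hρ => Or.inl (div_pos (hρpos ρ hρ) hη).ne'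
    have hne3 : ∀ ρ ∈ Icc ρs ρe, (id ρ : ℝ) ≠ 0 ∨ (0:ℝ) ≤ q :=
      fun ρ hρ => Or.inl (hρpos ρ hρ).ne'
    exact ((Real.continuous_exp.comp_continuousOn
      (((continuousOn_const.mul (h1.rpow_const hne2)).div_const p).neg)).mul
      (h1.rpow_const hne)).mul (continuousOn_id.rpow_const hne3)
  have hLc : ContinuousOn L (Icc ρs ρe) := (hbasec a (s - n - 1)).mul (hψc.norm.pow 2)
  have hRc : ContinuousOn R (Icc ρs ρe) :=
    (hbasec (n - 2 - p - 2 * κ) (s - n + 1)).mul (hcont.norm.pow 2)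
  have hLint : IntervalIntegrable L MeasureTheory.volume ρs ρe := by
    apply ContinuousOn.intervalIntegrable; rwa [uIcc_of_le hle]
  have hRint : IntervalIntegrable R MeasureTheory.volume ρs ρe := by
    apply ContinuousOn.intervalIntegrable; rwa [uIcc_of_le hle]
  have hmain : lam * (2 * κ + 2 - s) * (∫ ρ in ρs..ρe, L ρ) ≤ lam * g ρs + ∫ ρ in ρs..ρe, R ρ := by
    calc lam * (2 * κ + 2 - s) * (∫ ρ in ρs..ρe, L ρ)
        = ∫ ρ in ρs..ρe, lam * (2 * κ + 2 - s) * L ρ := (integral_const_mul _ _).symm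
      _ ≤ ∫ ρ in ρs..ρe, (-(lam * G ρ) + R ρ) := by
          have hi1 : IntervalIntegrable (fun ρ => lam * (2 * κ + 2 - s) * L ρ)
              MeasureTheory.volume ρs ρe := hLint.const_mul _
          have hi2 : IntervalIntegrable (fun ρ => -(lam * G ρ) + R ρ)
              MeasureTheory.volume ρs ρe := by
            simpa [Pi.neg_def] using ((hGint.const_mul lam).neg.add hRint)
          exact integral_mono_on hle hi1 hi2 hpt
      _ = -(lam * (g ρe - g ρs)) + ∫ ρ in ρs..ρe, R ρ := by
          have hi3 : IntervalIntegrable (fun ρ => -(lam * G ρ))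
              MeasureTheory.volume ρs ρe := by
            simpa [Pi.neg_def] using (hGint.const_mul lam).neg
          rw [integral_add hi3 hRint, integral_neg, integral_const_mul, hFTC]
      _ ≤ lam * g ρs + ∫ ρ in ρs..ρe, R ρ := by
          have hge : 0 ≤ g ρe :=
            mul_nonneg (hwpos ρe (lt_of_lt_of_le hρs hle)).le (sq_nonneg _)
          nlinarith
  have hbd : lam * Real.exp (-(lam * (ρs / η) ^ p / p)) * (ρs / η) ^ a *
      ρs ^ b * ‖ψ ρs‖ ^ 2 = lam * g ρs := by
    simp only [hg, hw]; ring
  calc lam * (2 * κ + 2 - s) * (∫ ρ in ρs..ρe, L ρ) ≤ lam * g ρs + ∫ ρ in ρs..ρe, R ρ := hmain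
    _ = lam * Real.exp (-(lam * (ρs / η) ^ p / p)) * (ρs / η) ^ a * ρs ^ b * ‖ψ ρs‖ ^ 2
        + ∫ ρ in ρs..ρe, R ρ := by rw [hbd]

end
end

section
/- Let n ≥ 2 and let q : ℝⁿ → ℝ be the Minkowski quadratic form q(x) := −x₁² + x₂² + ⋯ + xₙ². For a symmetric bilinear form B on ℝⁿ, the following are equivalent: (i) B(Z, Z) > 0 for every nonzero Z ∈ ℝⁿ with q(Z) = 0; (ii) there exists ζ ∈ ℝ such that the quadratic form v ↦ B(v, v) − ζ · q(v) is positive definite on ℝⁿ. -/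
open Matrix


private lemma ratio_key {V : Type*} [AddCommGroup V] [Module ℝ V]
    (f g : V → ℝ) (fb gb : V → V → ℝ)
    (hfe : ∀ x y : V, ∀ s : ℝ, f (x + s • y) = f x + 2*s*(fb x y) + s^2 * f y)
    (hge : ∀ x y : V, ∀ s : ℝ, g (x + s • y) = g x + 2*s*(gb x y) + s^2 * g y)
    (hgs : ∀ (c : ℝ) (y : V), g (c • y) = c^2 * g y)
    (hcone : ∀ z : V, z ≠ 0 → g z = 0 → 0 < f z)
    {x y : V} (hx : g x < 0) (hy : 0 < g y) :
    f y * g x < f x * g y := by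
  have hb0 : g y ≠ 0 := ne_of_gt hy
  have habneg : g x * g y < 0 := mul_neg_of_neg_of_pos hx hy
  set r := Real.sqrt ((gb x y)^2 - g x * g y) with hrdef
  have hr2 : r^2 = (gb x y)^2 - g x * g y := Real.sq_sqrt (by nlinarith [sq_nonneg (gb x y)])
  have hr0 : 0 ≤ r := Real.sqrt_nonneg _
  have her : gb x y < r := by nlinarith
  have her' : -(gb x y) < r := by nlinarith
  set s₁ := (-(gb x y) - r)/(g y) with hs₁def
  set s₂ := (-(gb x y) + r)/(g y) with hs₂def
  have hs₁ : s₁ < 0 := div_neg_of_neg_of_pos (by linarith) hy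
  have hs₂ : 0 < s₂ := div_pos (by linarith) hy
  have hbs₁ : g y * s₁ = -(gb x y) - r := by rw [hs₁def]; field_simp
  have hbs₂ : g y * s₂ = -(gb x y) + r := by rw [hs₂def]; field_simp
  have hne : ∀ s : ℝ, x + s • y ≠ 0 := by
    intro s h
    have hx' : x = (-s) • y := by
      rw [neg_smul]; rw [add_eq_zero_iff_eq_neg] at h; exact h
    have h2 : g x = s^2 * g y := by rw [hx', hgs]; ring_nf
    nlinarith [sq_nonneg s]
  have hzero : ∀ s : ℝ, g x + 2*s*(gb x y) + s^2*(g y) = 0 →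
      0 < f x + 2*s*(fb x y) + s^2*(f y) := by
    intro s hsz
    have := hcone (x + s • y) (hne s) (by rw [hge]; linarith)
    rw [hfe] at this; linarith
  have hz₁ : g x + 2*s₁*(gb x y) + s₁^2*(g y) = 0 := by
    have h1 : g y * (g x + 2*s₁*(gb x y) + s₁^2*(g y)) = 0 := by
      linear_combination (s₁*(g y) + gb x y - r) * hbs₁ + hr2
    exact (mul_eq_zero.mp h1).resolve_left hb0
  have hz₂ : g x + 2*s₂*(gb x y) + s₂^2*(g y) = 0 := by
    have h1 : g y * (g x + 2*s₂*(gb x y) + s₂^2*(g y)) = 0 := by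
      linear_combination (s₂*(g y) + gb x y + r) * hbs₂ + hr2
    exact (mul_eq_zero.mp h1).resolve_left hb0
  have hF₁ := hzero s₁ hz₁
  have hF₂ := hzero s₂ hz₂
  have hv : s₁*s₂*(g y) = g x := by
    apply mul_left_cancel₀ hb0
    have h3 : (g y*s₁)*(g y*s₂) = g x * g y := by
      rw [hbs₁, hbs₂]; linear_combination - hr2
    linear_combination h3
  have hpos : 0 < s₂ * (f x + 2*s₁*(fb x y) + s₁^2*(f y))
      + (-s₁) * (f x + 2*s₂*(fb x y) + s₂^2*(f y)) :=
    add_pos (mul_pos hs₂ hF₁) (mul_pos (neg_pos.2 hs₁) hF₂)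
  have h4 : 0 < (s₂ - s₁) * (f x - s₁*s₂*(f y)) := by nlinarith [hpos]
  have h5 : 0 < f x - s₁*s₂*(f y) := by nlinarith [h4]
  have h7 : 0 < (g y) * (f x - s₁*s₂*(f y)) := mul_pos hy h5
  have h8 : (g y) * (f x - s₁*s₂*(f y)) = f x * g y - f y * g x := by
    linear_combination (-(f y)) * hv
  linarith


private lemma exists_shift {n : ℕ} (f g : (Fin n → ℝ) → ℝ)
    (hfc : Continuous f) (hgc : Continuous g)
    {K : Set (Fin n → ℝ)} (hK : IsCompact K)
    (hKg : ∀ x ∈ K, g x ≤ 0) (h0 : ∀ x ∈ K, g x = 0 → 0 < f x) :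
    ∃ ζ : ℝ, ∀ x ∈ K, ζ * g x < f x := by
  classical
  set C : Set (Fin n → ℝ) := K ∩ {x | f x ≤ 0} with hCdef
  have hCc : IsCompact C := hK.inter_right (isClosed_le hfc continuous_const)
  rcases C.eq_empty_or_nonempty with hCe | hCne
  · refine ⟨0, fun x hx => ?_⟩
    have : x ∉ C := by rw [hCe]; exact Set.notMem_empty x
    have hfx : ¬ f x ≤ 0 := fun h => this ⟨hx, h⟩
    simpa using lt_of_not_ge hfx
  · obtain ⟨x₀, hx₀C, hmax⟩ := hCc.exists_isMaxOn hCne (hgc.continuousOn)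
    have hKne : K.Nonempty := ⟨x₀, hx₀C.1⟩
    obtain ⟨z₀, hz₀K, hmin⟩ := hK.exists_isMinOn hKne (hfc.continuousOn)
    have hgx₀ : g x₀ < 0 := by
      rcases lt_or_eq_of_le (hKg x₀ hx₀C.1) with h | h
      · exact h
      · exact absurd (h0 x₀ hx₀C.1 h) (not_lt.2 hx₀C.2)
    set η := -(g x₀) with hηdef
    have hη : 0 < η := by simp [hηdef]; linarith
    have hm₀ : f z₀ ≤ 0 := le_trans (hmin hx₀C.1) hx₀C.2
    set ζ := (1 - f z₀)/η with hζdef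
    have hζpos : 0 < ζ := div_pos (by linarith) hη
    refine ⟨ζ, fun x hx => ?_⟩
    by_cases hfx : f x ≤ 0
    · have hxC : x ∈ C := ⟨hx, hfx⟩
      have hgle : g x ≤ -η := by have := hmax hxC; simpa [hηdef] using this
      have h1 : ζ * g x ≤ ζ * (-η) := mul_le_mul_of_nonneg_left hgle hζpos.le
      have h2 : ζ * η = 1 - f z₀ := by rw [hζdef]; field_simp [hη.ne']
      have h3 : f z₀ ≤ f x := hmin hx
      nlinarith
    · have : ζ * g x ≤ 0 := mul_nonpos_of_nonneg_of_nonpos hζpos.le (hKg x hx)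
      linarith [lt_of_not_ge hfx]

private lemma forward_aux {n : ℕ} (f g : (Fin n → ℝ) → ℝ) (fb gb : (Fin n → ℝ) → (Fin n → ℝ) → ℝ)
    (hfc : Continuous f) (hgc : Continuous g)
    (hfe : ∀ x y : Fin n → ℝ, ∀ s : ℝ, f (x + s • y) = f x + 2*s*(fb x y) + s^2 * f y)
    (hge : ∀ x y : Fin n → ℝ, ∀ s : ℝ, g (x + s • y) = g x + 2*s*(gb x y) + s^2 * g y)
    (hfs : ∀ (c : ℝ) (y : Fin n → ℝ), f (c • y) = c^2 * f y)
    (hgs : ∀ (c : ℝ) (y : Fin n → ℝ), g (c • y) = c^2 * g y)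
    (xm xp : Fin n → ℝ) (hxmn : ‖xm‖ = 1) (hxmg : g xm ≤ 0)
    (hxpn : ‖xp‖ = 1) (hxpg : 0 ≤ g xp)
    (hcone : ∀ z : Fin n → ℝ, z ≠ 0 → g z = 0 → 0 < f z) :
    ∃ ζ : ℝ, ∀ v : Fin n → ℝ, v ≠ 0 → 0 < f v - ζ * g v := by
  classical
  set Sm : Set (Fin n → ℝ) := Metric.sphere 0 1 ∩ {x | g x ≤ 0} with hSmdef
  set Sp : Set (Fin n → ℝ) := Metric.sphere 0 1 ∩ {x | 0 ≤ g x} with hSpdef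
  have hSmc : IsCompact Sm := (isCompact_sphere 0 1).inter_right (isClosed_le hgc continuous_const)
  have hSpc : IsCompact Sp := (isCompact_sphere 0 1).inter_right (isClosed_le continuous_const hgc)
  have hmemn : ∀ x : Fin n → ℝ, x ∈ Metric.sphere (0 : Fin n → ℝ) 1 ↔ ‖x‖ = 1 := by
    intro x; rw [mem_sphere_zero_iff_norm]
  have hSmne : Sm.Nonempty := ⟨xm, (hmemn xm).2 hxmn, hxmg⟩
  have hSpne : Sp.Nonempty := ⟨xp, (hmemn xp).2 hxpn, hxpg⟩
  have hunitne : ∀ x : Fin n → ℝ, ‖x‖ = 1 → x ≠ 0 := by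
    intro x hx h; rw [h] at hx; simp at hx
  set W : Set ℝ := {ζ | ∀ x ∈ Sm, ζ * g x < f x} with hWdef
  set W' : Set ℝ := {ζ | ∀ x ∈ Sp, ζ * g x < f x} with hW'def
  have hWne : W.Nonempty := by
    obtain ⟨ζ, hζ⟩ := exists_shift f g hfc hgc hSmc (fun x hx => hx.2)
      (fun x hx h => hcone x (hunitne x ((hmemn x).1 hx.1)) h)
    exact ⟨ζ, hζ⟩
  have hW'ne : W'.Nonempty := by
    obtain ⟨ζ, hζ⟩ := exists_shift f (fun x => -(g x)) hfc hgc.neg hSpc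
      (fun x hx => by simpa using hx.2)
      (fun x hx h => hcone x (hunitne x ((hmemn x).1 hx.1)) (by simpa using h))
    refine ⟨-ζ, fun x hx => ?_⟩
    have := hζ x hx
    nlinarith [this]
  -- final conclusion from a common witness
  have hfinal : ∀ ζ : ℝ, ζ ∈ W → ζ ∈ W' → ∀ v : Fin n → ℝ, v ≠ 0 → 0 < f v - ζ * g v := by
    intro ζ hζW hζW' v hv
    have hnv : ‖v‖ ≠ 0 := norm_ne_zero_iff.2 hv
    set u : Fin n → ℝ := ‖v‖⁻¹ • v with hudef
    have hun : ‖u‖ = 1 := by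
      rw [hudef, norm_smul, norm_inv, norm_norm, inv_mul_cancel₀ hnv]
    have hvu : v = ‖v‖ • u := by
      rw [hudef, smul_smul, mul_inv_cancel₀ hnv, one_smul]
    have hval : 0 < f u - ζ * g u := by
      rcases le_total (g u) 0 with h' | h'
      · have := hζW u ⟨(hmemn u).2 hun, h'⟩; linarith
      · have := hζW' u ⟨(hmemn u).2 hun, h'⟩; linarith
    have hn2 : 0 < ‖v‖^2 := by positivity
    have hfv : f v = ‖v‖^2 * f u := by conv_lhs => rw [hvu, hfs]
    have hgv : g v = ‖v‖^2 * g u := by conv_lhs => rw [hvu, hgs]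
    calc (0:ℝ) < ‖v‖^2 * (f u - ζ * g u) := mul_pos hn2 hval
      _ = f v - ζ * g v := by rw [hfv, hgv]; ring
  by_cases hWW : (W ∩ W').Nonempty
  · obtain ⟨ζ, hζW, hζW'⟩ := hWW
    exact ⟨ζ, hfinal ζ hζW hζW'⟩
  · exfalso
    have horder : ∀ w ∈ W, ∀ w' ∈ W', w' < w := by
      intro w hw w' hw'
      by_contra hle
      push_neg at hle
      have hwW' : w ∈ W' := by
        intro x hx
        have h1 := hw' x hx
        have h2 : w * g x ≤ w' * g x := mul_le_mul_of_nonneg_right hle hx.2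
        linarith
      exact hWW ⟨w, hw, hwW'⟩
    obtain ⟨w₀, hw₀⟩ := hWne
    obtain ⟨w'₀, hw'₀⟩ := hW'ne
    have hWbdd : BddBelow W := ⟨w'₀, fun w hw => (horder w hw w'₀ hw'₀).le⟩
    have hW'bdd : BddAbove W' := ⟨w₀, fun w' hw' => (horder w₀ hw₀ w' hw').le⟩
    set c := sInf W with hcdef
    set c' := sSup W' with hc'def
    have hc'c : c' ≤ c := by
      apply le_csInf ⟨w₀, hw₀⟩
      intro w hw
      exact csSup_le ⟨w'₀, hw'₀⟩ fun w' hw' => (horder w hw w' hw').le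
    -- c ∉ W
    have hcW : c ∉ W := by
      intro hc
      obtain ⟨y₀, hy₀Sm, hminy⟩ := hSmc.exists_isMinOn hSmne
        (((hfc.sub (continuous_const.mul hgc)).continuousOn :
          ContinuousOn (fun x => f x - c * g x) Sm))
      obtain ⟨y₁, hy₁Sm, hmaxg⟩ := hSmc.exists_isMaxOn hSmne (hgc.neg.continuousOn)
      have hμ : 0 < f y₀ - c * g y₀ := by have := hc y₀ hy₀Sm; linarith
      have hR0 : 0 ≤ -(g y₁) := by
        have h := hy₁Sm.2; simp only [Set.mem_setOf_eq] at h; linarith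
      set μ := f y₀ - c * g y₀ with hμdef
      set R := -(g y₁) with hRdef
      set γ := μ / (2*(R+1)) with hγdef
      have hγ : 0 < γ := div_pos hμ (by linarith)
      have hγR : γ * (R+1) = μ/2 := by rw [hγdef]; field_simp
      have hmem : (c - γ) ∈ W := by
        intro x hx
        have h1 : f y₀ - c * g y₀ ≤ f x - c * g x := isMinOn_iff.mp hminy x hx
        have h2 : -(g x) ≤ -(g y₁) := isMaxOn_iff.mp hmaxg x hx
        have hA : γ * (-(g x)) ≤ γ * R := mul_le_mul_of_nonneg_left (by rw [hRdef]; exact h2) hγ.le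
        nlinarith
      have := csInf_le hWbdd hmem
      rw [← hcdef] at this
      linarith
    -- c' ∉ W'
    have hc'W' : c' ∉ W' := by
      intro hc'
      obtain ⟨y₀, hy₀Sp, hminy⟩ := hSpc.exists_isMinOn hSpne
        (((hfc.sub (continuous_const.mul hgc)).continuousOn :
          ContinuousOn (fun x => f x - c' * g x) Sp))
      obtain ⟨y₁, hy₁Sp, hmaxg⟩ := hSpc.exists_isMaxOn hSpne (hgc.continuousOn)
      have hμ : 0 < f y₀ - c' * g y₀ := by have := hc' y₀ hy₀Sp; linarith
      have hR0 : 0 ≤ g y₁ := by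
        have h := hy₁Sp.2; simp only [Set.mem_setOf_eq] at h; linarith
      set μ := f y₀ - c' * g y₀ with hμdef
      set R := g y₁ with hRdef
      set γ := μ / (2*(R+1)) with hγdef
      have hγ : 0 < γ := div_pos hμ (by linarith)
      have hγR : γ * (R+1) = μ/2 := by rw [hγdef]; field_simp
      have hmem : (c' + γ) ∈ W' := by
        intro x hx
        have h1 : f y₀ - c' * g y₀ ≤ f x - c' * g x := isMinOn_iff.mp hminy x hx
        have h2 : g x ≤ g y₁ := isMaxOn_iff.mp hmaxg x hx
        have hA : γ * (g x) ≤ γ * R := mul_le_mul_of_nonneg_left (by rw [hRdef]; exact h2) hγ.le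
        nlinarith
      have := le_csSup hW'bdd hmem
      rw [← hc'def] at this
      linarith
    -- extract failure points
    obtain ⟨x, hxSm, hfx⟩ : ∃ x ∈ Sm, f x ≤ c * g x := by
      by_contra hno
      push_neg at hno
      exact hcW fun x hx => hno x hx
    obtain ⟨y, hySp, hfy⟩ : ∃ y ∈ Sp, f y ≤ c' * g y := by
      by_contra hno
      push_neg at hno
      exact hc'W' fun y hy => hno y hy
    have hgx : g x < 0 := by
      have hxle : g x ≤ 0 := hxSm.2
      rcases lt_or_eq_of_le hxle with h | h
      · exact h
      · exfalso
        have h1 := hcone x (hunitne x ((hmemn x).1 hxSm.1)) h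
        rw [h, mul_zero] at hfx
        linarith
    have hgy : 0 < g y := by
      have hyle : 0 ≤ g y := hySp.2
      rcases lt_or_eq_of_le hyle with h | h
      · exact h
      · exfalso
        have h1 := hcone y (hunitne y ((hmemn y).1 hySp.1)) h.symm
        rw [← h, mul_zero] at hfy
        linarith
    have key := ratio_key f g fb gb hfe hge hgs hcone hgx hgy
    have m1 : f x * g y ≤ (c * g x) * g y := mul_le_mul_of_nonneg_right hfx hgy.le
    have m2 : (c' * g y) * g x ≤ f y * g x := mul_le_mul_of_nonpos_right hfy hgx.le
    have m3 : c * (g x * g y) ≤ c' * (g x * g y) :=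
      mul_le_mul_of_nonpos_right hc'c (by nlinarith)
    nlinarith [key, m1, m2, m3]

/-- **Positivity on the null cone versus positive definiteness** (pointwise content of
Remark 1.8): a symmetric bilinear form `B` on `ℝⁿ` is positive on the nonzero null
vectors of the Minkowski form `q(x) = −x₀² + x₁² + ⋯` if and only if `B − ζ·q` is
positive definite for some `ζ ∈ ℝ`. -/
theorem null_positivity_iff_posdef_shift
    {n : ℕ} (hn : 2 ≤ n) (B : Matrix (Fin n) (Fin n) ℝ) (hB : B.IsSymm) :
    (∀ Z : Fin n → ℝ, Z ≠ 0 →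
        (∑ i : Fin n, (if (i : ℕ) = 0 then (-1 : ℝ) else 1) * Z i ^ 2) = 0 →
        0 < Z ⬝ᵥ B.mulVec Z) ↔
    (∃ ζ : ℝ, ∀ v : Fin n → ℝ, v ≠ 0 →
        0 < v ⬝ᵥ B.mulVec v
          - ζ * ∑ i : Fin n, (if (i : ℕ) = 0 then (-1 : ℝ) else 1) * v i ^ 2) := by
  classical
  have hne : NeZero n := ⟨by omega⟩
  constructor
  · intro h
    -- symmetry of the matrix form
    have hsymm : ∀ x y : Fin n → ℝ, y ⬝ᵥ B.mulVec x = x ⬝ᵥ B.mulVec y := by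
      intro x y
      simp only [dotProduct, Matrix.mulVec, Finset.mul_sum]
      rw [Finset.sum_comm]
      refine Finset.sum_congr rfl fun i _ => Finset.sum_congr rfl fun j _ => ?_
      have hBij : B j i = B i j := hB.apply i j
      rw [hBij]; ring
    have hfe : ∀ x y : Fin n → ℝ, ∀ s : ℝ,
        (x + s • y) ⬝ᵥ B.mulVec (x + s • y)
          = x ⬝ᵥ B.mulVec x + 2*s*(x ⬝ᵥ B.mulVec y) + s^2 * (y ⬝ᵥ B.mulVec y) := by
      intro x y s
      have hyx := hsymm x y
      simp only [Matrix.mulVec_add, Matrix.mulVec_smul, dotProduct_add, add_dotProduct,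
        dotProduct_smul, smul_dotProduct, smul_eq_mul]
      rw [hyx]; ring
    have hfs : ∀ (c : ℝ) (y : Fin n → ℝ),
        (c • y) ⬝ᵥ B.mulVec (c • y) = c^2 * (y ⬝ᵥ B.mulVec y) := by
      intro c y
      simp only [Matrix.mulVec_smul, dotProduct_smul, smul_dotProduct, smul_eq_mul]
      ring
    have hge : ∀ x y : Fin n → ℝ, ∀ s : ℝ,
        (∑ i : Fin n, (if (i : ℕ) = 0 then (-1 : ℝ) else 1) * (x + s • y) i ^ 2)
          = (∑ i : Fin n, (if (i : ℕ) = 0 then (-1 : ℝ) else 1) * x i ^ 2)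
            + 2*s*(∑ i : Fin n, (if (i : ℕ) = 0 then (-1 : ℝ) else 1) * (x i * y i))
            + s^2 * (∑ i : Fin n, (if (i : ℕ) = 0 then (-1 : ℝ) else 1) * y i ^ 2) := by
      intro x y s
      simp only [Pi.add_apply, Pi.smul_apply, smul_eq_mul, Finset.mul_sum]
      rw [← Finset.sum_add_distrib, ← Finset.sum_add_distrib]
      exact Finset.sum_congr rfl fun i _ => by ring
    have hgs : ∀ (c : ℝ) (y : Fin n → ℝ),
        (∑ i : Fin n, (if (i : ℕ) = 0 then (-1 : ℝ) else 1) * (c • y) i ^ 2)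
          = c^2 * (∑ i : Fin n, (if (i : ℕ) = 0 then (-1 : ℝ) else 1) * y i ^ 2) := by
      intro c y
      simp only [Pi.smul_apply, smul_eq_mul, Finset.mul_sum]
      exact Finset.sum_congr rfl fun i _ => by ring
    have hfc : Continuous fun v : Fin n → ℝ => v ⬝ᵥ B.mulVec v := by
      simp only [dotProduct, Matrix.mulVec]
      exact continuous_finset_sum _ fun i _ => (continuous_apply i).mul
        (continuous_finset_sum _ fun j _ => continuous_const.mul (continuous_apply j))
    have hgc : Continuous fun v : Fin n → ℝ =>
        ∑ i : Fin n, (if (i : ℕ) = 0 then (-1 : ℝ) else 1) * v i ^ 2 :=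
      continuous_finset_sum _ fun i _ => continuous_const.mul ((continuous_apply i).pow 2)
    -- special sphere points
    set i₀ : Fin n := ⟨0, by omega⟩ with hi₀
    set i₁ : Fin n := ⟨1, by omega⟩ with hi₁
    have hnormsingle : ∀ k : Fin n, ‖(fun j => if j = k then (1:ℝ) else 0 : Fin n → ℝ)‖ = 1 := by
      intro k
      apply le_antisymm
      · rw [pi_norm_le_iff_of_nonneg zero_le_one]
        intro j
        by_cases hj : j = k <;> simp [hj]
      · have := norm_le_pi_norm (fun j => if j = k then (1:ℝ) else 0) k
        simpa using this
    have hgsingle : ∀ k : Fin n,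
        (∑ i : Fin n, (if (i : ℕ) = 0 then (-1 : ℝ) else 1)
          * (if i = k then (1:ℝ) else 0) ^ 2)
        = (if (k : ℕ) = 0 then (-1:ℝ) else 1) := by
      intro k
      rw [Finset.sum_eq_single k]
      · simp
      · intro i _ hik
        simp [hik]
      · intro hk
        exact absurd (Finset.mem_univ k) hk
    obtain ⟨ζ, hζ⟩ := forward_aux
      (fun v => v ⬝ᵥ B.mulVec v)
      (fun v => ∑ i : Fin n, (if (i : ℕ) = 0 then (-1 : ℝ) else 1) * v i ^ 2)
      (fun x y => x ⬝ᵥ B.mulVec y)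
      (fun x y => ∑ i : Fin n, (if (i : ℕ) = 0 then (-1 : ℝ) else 1) * (x i * y i))
      hfc hgc hfe hge hfs hgs
      (fun j => if j = i₀ then (1:ℝ) else 0) (fun j => if j = i₁ then (1:ℝ) else 0)
      (hnormsingle i₀)
      (by show (∑ i : Fin n, (if (i : ℕ) = 0 then (-1 : ℝ) else 1)
            * (if i = i₀ then (1:ℝ) else 0) ^ 2) ≤ 0
          rw [hgsingle i₀]; norm_num [hi₀])
      (hnormsingle i₁)
      (by show (0:ℝ) ≤ (∑ i : Fin n, (if (i : ℕ) = 0 then (-1 : ℝ) else 1)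
            * (if i = i₁ then (1:ℝ) else 0) ^ 2)
          rw [hgsingle i₁]; norm_num [hi₁])
      h
    exact ⟨ζ, hζ⟩
  · rintro ⟨ζ, hζ⟩ Z hZ hnull
    have := hζ Z hZ
    rw [hnull, mul_zero, sub_zero] at this
    exact this
end

section
/- Let a < b be real numbers. There exist a function η : [a,b] → ℝ, twice continuously differentiable, and a constant c > 0 such that η > 0 on (a,b), η(a) = η(b) = 0, and η″(t) + η(t) ≥ c · η(t) for all t ∈ (a,b), if and only if b − a > π. -/
open Set

/-- **ODE characterisation of the GNCC on AdS time slabs** (Proposition 1.9): there is a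
`C²` function `η` on `[a,b]`, positive on `(a,b)`, vanishing at the endpoints, with
`η″ + η ≥ c·η` on `(a,b)` for some `c > 0`, if and only if `b − a > π`. -/
theorem gncc_ode_iff_length_gt_pi (a b : ℝ) (hab : a < b) :
    (∃ (η : ℝ → ℝ) (c : ℝ), 0 < c ∧
      ContDiffOn ℝ 2 η (Icc a b) ∧
      (∀ t ∈ Ioo a b, 0 < η t) ∧ η a = 0 ∧ η b = 0 ∧
      (∀ t ∈ Ioo a b, c * η t ≤ deriv (deriv η) t + η t)) ↔
    Real.pi < b - a := by
  constructor
  · rintro ⟨η, c, hc, hC2, hpos, ha0, hb0, hode⟩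
    by_contra hle
    push_neg at hle
    -- hle : b - a ≤ π
    set f := derivWithin η (Icc a b) with hf_def
    have hud : UniqueDiffOn ℝ (Icc a b) := uniqueDiffOn_Icc hab
    have hdiff : DifferentiableOn ℝ η (Icc a b) := hC2.differentiableOn (by norm_num)
    have hfc : ContinuousOn f (Icc a b) := hC2.continuousOn_derivWithin hud (by norm_num)
    have hfC1 : ContDiffOn ℝ 1 f (Icc a b) := hC2.derivWithin hud (by norm_num)
    have hmem : ∀ t ∈ Ioo a b, Icc a b ∈ nhds t := fun t ht =>
      Icc_mem_nhds ht.1 ht.2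
    have hη' : ∀ t ∈ Ioo a b, HasDerivAt η (f t) t := by
      intro t ht
      exact ((hdiff t (Ioo_subset_Icc_self ht)).hasDerivWithinAt).hasDerivAt (hmem t ht)
    have hη'' : ∀ t ∈ Ioo a b, HasDerivAt f (deriv (deriv η) t) t := by
      intro t ht
      have h1 : HasDerivAt f (derivWithin f (Icc a b) t) t :=
        (((hfC1.differentiableOn (by norm_num)) t (Ioo_subset_Icc_self ht)).hasDerivWithinAt).hasDerivAt
          (hmem t ht)
      have heq : deriv η =ᶠ[nhds t] f := by
        filter_upwards [Ioo_mem_nhds ht.1 ht.2] with s hs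
        exact (hη' s hs).deriv
      have : deriv (deriv η) t = deriv f t := heq.deriv_eq
      rw [this, h1.deriv]
      exact h1
    -- Wronskian
    set W : ℝ → ℝ := fun t => f t * Real.sin (t - a) - η t * Real.cos (t - a) with hW_def
    have hWc : ContinuousOn W (Icc a b) := by
      apply ContinuousOn.sub
      · exact hfc.mul ((Real.continuous_sin.comp (continuous_id.sub continuous_const)).continuousOn)
      · exact hC2.continuousOn.mul
          ((Real.continuous_cos.comp (continuous_id.sub continuous_const)).continuousOn)
    have hWd : ∀ t ∈ Ioo a b, HasDerivAt W ((deriv (deriv η) t + η t) * Real.sin (t - a)) t := by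
      intro t ht
      have hsin : HasDerivAt (fun t => Real.sin (t - a)) (Real.cos (t - a)) t := by
        have := (Real.hasDerivAt_sin (t - a)).comp t ((hasDerivAt_id t).sub_const a)
        simpa [Function.comp_def] using this
      have hcos : HasDerivAt (fun t => Real.cos (t - a)) (-Real.sin (t - a)) t := by
        have := (Real.hasDerivAt_cos (t - a)).comp t ((hasDerivAt_id t).sub_const a)
        simpa [Function.comp_def] using this
      have h1 := ((hη'' t ht).mul hsin).sub ((hη' t ht).mul hcos)
      refine (h1 : HasDerivAt W _ t).congr_deriv ?_
      ring
    have hsinpos : ∀ t ∈ Ioo a b, 0 < Real.sin (t - a) := by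
      intro t ht
      apply Real.sin_pos_of_pos_of_lt_pi (by linarith [ht.1])
      linarith [ht.2]
    have hWmono : StrictMonoOn W (Icc a b) := by
      apply strictMonoOn_of_deriv_pos (convex_Icc a b) hWc
      intro t ht
      rw [interior_Icc] at ht
      rw [(hWd t ht).deriv]
      have h1 := hode t ht
      have h2 := hpos t ht
      have : 0 < deriv (deriv η) t + η t := lt_of_lt_of_le (by positivity) h1
      exact mul_pos this (hsinpos t ht)
    have hηnn : ∀ t ∈ Icc a b, 0 ≤ η t := by
      intro t ht
      rcases eq_or_lt_of_le ht.1 with h | h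
      · rw [← h, ha0]
      rcases eq_or_lt_of_le ht.2 with h2 | h2
      · rw [h2, hb0]
      · exact (hpos t ⟨h, h2⟩).le
    -- f b ≤ 0
    have hfb : f b ≤ 0 := by
      have hd : HasDerivWithinAt η (f b) (Icc a b) b :=
        (hdiff b (right_mem_Icc.2 hab.le)).hasDerivWithinAt
      have htend := hasDerivWithinAt_iff_tendsto_slope.1 hd
      have hset : Icc a b \ {b} = Ico a b := Icc_sdiff_right
      rw [hset] at htend
      haveI := right_nhdsWithin_Ico_neBot hab
      refine le_of_tendsto htend ?_
      filter_upwards [eventually_mem_nhdsWithin] with t ht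
      have h1 : t - b < 0 := by linarith [ht.2]
      have h2 : 0 ≤ η t := hηnn t ⟨ht.1, ht.2.le⟩
      rw [slope_def_field, div_eq_inv_mul]
      have : η t - η b = η t := by rw [hb0]; ring
      rw [this]
      exact mul_nonpos_of_nonpos_of_nonneg (inv_nonpos.2 h1.le) h2
    have hWa : W a = 0 := by simp [hW_def, ha0]
    have hWb : W b ≤ 0 := by
      have : W b = f b * Real.sin (b - a) := by simp [hW_def, hb0]
      rw [this]
      exact mul_nonpos_of_nonpos_of_nonneg hfb
        (Real.sin_nonneg_of_nonneg_of_le_pi (by linarith) hle)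
    have := hWmono (left_mem_Icc.2 hab.le) (right_mem_Icc.2 hab.le) hab
    linarith
  · intro h
    have hL : 0 < b - a := by linarith
    set k := Real.pi / (b - a) with hk_def
    have hk0 : 0 < k := div_pos Real.pi_pos hL
    have hk1 : k < 1 := (div_lt_one hL).2 h
    refine ⟨fun t => Real.sin (k * (t - a)), 1 - k ^ 2, by nlinarith, ?_, ?_, ?_, ?_, ?_⟩
    · exact ((Real.contDiff_sin.comp (contDiff_const.mul (contDiff_id.sub contDiff_const) : ContDiff ℝ ⊤ fun t : ℝ => k * (t - a))).of_le le_top).contDiffOn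
    · intro t ht
      apply Real.sin_pos_of_pos_of_lt_pi
      · have : 0 < t - a := by linarith [ht.1]
        positivity
      · have h1 : k * (t - a) < k * (b - a) := by
          apply mul_lt_mul_of_pos_left _ hk0
          linarith [ht.2]
        have h2 : k * (b - a) = Real.pi := div_mul_cancel₀ _ hL.ne'
        linarith
    · simp
    · show Real.sin (k * (b - a)) = 0
      rw [hk_def, div_mul_cancel₀ _ hL.ne', Real.sin_pi]
    · intro t ht
      have hd1 : ∀ s : ℝ, HasDerivAt (fun t => Real.sin (k * (t - a)))
          (Real.cos (k * (s - a)) * k) s := by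
        intro s
        have hinner : HasDerivAt (fun t : ℝ => k * (t - a)) k s := by
          simpa using ((hasDerivAt_id s).sub_const a).const_mul k
        simpa [Function.comp_def] using (Real.hasDerivAt_sin (k * (s - a))).comp s hinner
      have hderiv1 : deriv (fun t => Real.sin (k * (t - a)))
          = fun s => Real.cos (k * (s - a)) * k := funext fun s => (hd1 s).deriv
      have hd2 : HasDerivAt (fun s => Real.cos (k * (s - a)) * k)
          (-Real.sin (k * (t - a)) * k * k) t := by
        have hinner : HasDerivAt (fun s : ℝ => k * (s - a)) k t := by
          simpa using ((hasDerivAt_id t).sub_const a).const_mul k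
        have := ((Real.hasDerivAt_cos (k * (t - a))).comp t hinner).mul_const k
        simpa [mul_comm, mul_assoc, mul_left_comm] using this
      rw [hderiv1, hd2.deriv]
      have hnn : 0 ≤ Real.sin (k * (t - a)) := by
        apply Real.sin_nonneg_of_nonneg_of_le_pi
        · have : 0 < t - a := by linarith [ht.1]
          positivity
        · have h1 : k * (t - a) ≤ k * (b - a) :=
            mul_le_mul_of_nonneg_left (by linarith [ht.2]) hk0.le
          have h2 : k * (b - a) = Real.pi := div_mul_cancel₀ _ hL.ne'
          linarith
      nlinarith [sq_nonneg k]
end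

section
/- Let a < b be real numbers, let c ∈ (0,1), and let η : [a,b] → ℝ be continuous on [a,b] and twice differentiable on (a,b), with η > 0 on (a,b), η(a) = η(b) = 0, and η″(t) + η(t) ≥ c · η(t) for all t ∈ (a,b). Then b − a ≥ π/√(1−c). Moreover, if instead c ≥ 1, then no function η with these properties exists. -/
open Set

lemma exists_pos_neg_deriv {a b : ℝ} (hab : a < b) {f : ℝ → ℝ}
    (hc : ContinuousOn f (Icc a b)) (hd : ∀ x ∈ Ioo a b, DifferentiableAt ℝ f x)
    (ha : f a = 0) (hb : f b = 0) (hpos : ∀ x ∈ Ioo a b, 0 < f x) :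
    ∃ s ∈ Ioo a b, ∃ t ∈ Ioo s b, 0 < deriv f s ∧ deriv f t < 0 := by
  set m := (a + b) / 2 with hm
  have hm1 : a < m := by simp [hm]; linarith
  have hm2 : m < b := by simp [hm]; linarith
  obtain ⟨s, hs, hs'⟩ := exists_deriv_eq_slope f hm1
    (hc.mono (Icc_subset_Icc le_rfl hm2.le))
    (fun x hx => (hd x ⟨hx.1, hx.2.trans hm2⟩).differentiableWithinAt)
  have hsab : s ∈ Ioo a b := ⟨hs.1, hs.2.trans hm2⟩
  have hsb : s < b := hsab.2
  obtain ⟨t, ht, ht'⟩ := exists_deriv_eq_slope f hsb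
    (hc.mono (Icc_subset_Icc hsab.1.le le_rfl))
    (fun x hx => (hd x ⟨hsab.1.trans hx.1, hx.2⟩).differentiableWithinAt)
  refine ⟨s, hsab, t, ht, ?_, ?_⟩
  · rw [hs', ha]
    have h1 := hpos m ⟨hm1, hm2⟩
    have h2 : (0:ℝ) < m - a := by linarith
    rw [sub_zero]
    positivity
  · rw [ht', hb]
    have h1 := hpos s hsab
    have h2 : (0:ℝ) < b - s := by linarith
    have h3 : f s / (b - s) > 0 := by positivity
    rw [zero_sub, neg_div]
    linarith

/-- **Sharp Sturm comparison lemma** (necessity direction of Proposition 1.9): if `η` is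
continuous on `[a,b]`, twice differentiable and positive on `(a,b)`, vanishes at the
endpoints, and satisfies `η″ + η ≥ c·η` on `(a,b)` with `0 < c`, then `b − a ≥ π/√(1−c)`
when `c < 1`, and no such `η` exists when `c ≥ 1`. -/
theorem sturm_comparison_lower_bound
    {a b c : ℝ} (hab : a < b) (hc : 0 < c) (η : ℝ → ℝ)
    (hcont : ContinuousOn η (Icc a b))
    (hd1 : ∀ t ∈ Ioo a b, DifferentiableAt ℝ η t)
    (hd2 : ∀ t ∈ Ioo a b, DifferentiableAt ℝ (deriv η) t)
    (hpos : ∀ t ∈ Ioo a b, 0 < η t)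
    (ha : η a = 0) (hb : η b = 0)
    (hode : ∀ t ∈ Ioo a b, c * η t ≤ deriv (deriv η) t + η t) :
    (c < 1 → Real.pi / Real.sqrt (1 - c) ≤ b - a) ∧ (1 ≤ c → False) := by
  constructor
  · -- case c < 1
    intro hc1
    by_contra hlt
    push_neg at hlt
    set ω := Real.sqrt (1 - c) with hω
    have hω0 : 0 < ω := Real.sqrt_pos.2 (by linarith)
    have hωsq : ω * ω = 1 - c := Real.mul_self_sqrt (by linarith)
    have hπ : 0 < Real.pi := Real.pi_pos
    set a₀ := a - (Real.pi / ω - (b - a)) / 2 with ha₀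
    have hgap : 0 < Real.pi / ω - (b - a) := by linarith
    have ha₀a : a₀ < a := by rw [ha₀]; linarith
    have hπω : ω * (Real.pi / ω) = Real.pi := mul_div_cancel₀ _ hω0.ne'
    have hba₀ : ω * (b - a₀) < Real.pi := by
      have h1 : b - a₀ = (b - a) + (Real.pi / ω - (b - a)) / 2 := by rw [ha₀]; ring
      have h3 : ω * (b - a₀) = (ω * (b - a) + ω * (Real.pi / ω)) / 2 := by rw [h1]; ring
      have h2 : ω * (b - a) < Real.pi := by
        have := mul_lt_mul_of_pos_left hlt hω0
        rwa [hπω] at this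
      rw [hπω] at h3
      rw [h3]
      linarith
    have hy_pos : ∀ t ∈ Icc a b, 0 < Real.sin (ω * (t - a₀)) := by
      intro t ht
      apply Real.sin_pos_of_pos_of_lt_pi
      · exact mul_pos hω0 (by linarith [ht.1])
      · have : ω * (t - a₀) ≤ ω * (b - a₀) :=
          mul_le_mul_of_nonneg_left (by linarith [ht.2]) hω0.le
        linarith
    -- derivative of the sine comparison function
    have hyd : ∀ t : ℝ, HasDerivAt (fun u => Real.sin (ω * (u - a₀)))
        (Real.cos (ω * (t - a₀)) * ω) t := by
      intro t
      have h1 : HasDerivAt (fun u : ℝ => ω * (u - a₀)) ω t := by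
        simpa using ((hasDerivAt_id t).sub_const a₀).const_mul ω
      exact (Real.hasDerivAt_sin (ω * (t - a₀))).comp t h1
    have hycd : ∀ t : ℝ, HasDerivAt (fun u => Real.cos (ω * (u - a₀)))
        (-Real.sin (ω * (t - a₀)) * ω) t := by
      intro t
      have h1 : HasDerivAt (fun u : ℝ => ω * (u - a₀)) ω t := by
        simpa using ((hasDerivAt_id t).sub_const a₀).const_mul ω
      exact (Real.hasDerivAt_cos (ω * (t - a₀))).comp t h1
    -- the Wronskian
    set W : ℝ → ℝ := fun t =>
      η t * (Real.cos (ω * (t - a₀)) * ω) - deriv η t * Real.sin (ω * (t - a₀)) with hW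
    have hWd : ∀ x ∈ Ioo a b, HasDerivAt W
        ((deriv η x * (Real.cos (ω * (x - a₀)) * ω)
          + η x * (-Real.sin (ω * (x - a₀)) * ω * ω))
         - (deriv (deriv η) x * Real.sin (ω * (x - a₀))
          + deriv η x * (Real.cos (ω * (x - a₀)) * ω))) x := by
      intro x hx
      have h1 : HasDerivAt (fun u => η u * (Real.cos (ω * (u - a₀)) * ω))
          (deriv η x * (Real.cos (ω * (x - a₀)) * ω)
            + η x * (-Real.sin (ω * (x - a₀)) * ω * ω)) x := by
        have := (hd1 x hx).hasDerivAt.mul ((hycd x).mul_const ω)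
        exact this
      have h2 : HasDerivAt (fun u => deriv η u * Real.sin (ω * (u - a₀)))
          (deriv (deriv η) x * Real.sin (ω * (x - a₀))
            + deriv η x * (Real.cos (ω * (x - a₀)) * ω)) x :=
        (hd2 x hx).hasDerivAt.mul (hyd x)
      exact h1.sub h2
    have hWderiv_nonpos : ∀ x ∈ Ioo a b, deriv W x ≤ 0 := by
      intro x hx
      rw [(hWd x hx).deriv]
      have hsin : 0 < Real.sin (ω * (x - a₀)) :=
        hy_pos x ⟨hx.1.le, hx.2.le⟩
      have hο := hode x hx
      have key : 0 ≤ Real.sin (ω * (x - a₀)) *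
          ((1 - c) * η x + deriv (deriv η) x) := by
        apply mul_nonneg hsin.le
        linarith
      have e : deriv η x * (Real.cos (ω * (x - a₀)) * ω)
          + η x * (-Real.sin (ω * (x - a₀)) * ω * ω)
          - (deriv (deriv η) x * Real.sin (ω * (x - a₀))
            + deriv η x * (Real.cos (ω * (x - a₀)) * ω))
          = -(Real.sin (ω * (x - a₀)) * ((1 - c) * η x + deriv (deriv η) x)) := by
        rw [← hωsq]; ring
      rw [e]
      linarith
    -- the ratio r = η / y
    set r : ℝ → ℝ := fun t => η t / Real.sin (ω * (t - a₀)) with hr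
    have hsin_cont : ContinuousOn (fun t => Real.sin (ω * (t - a₀))) (Icc a b) :=
      (Real.continuous_sin.comp (by continuity)).continuousOn
    have hr_cont : ContinuousOn r (Icc a b) :=
      hcont.div hsin_cont (fun t ht => (hy_pos t ht).ne')
    have hrd : ∀ x ∈ Ioo a b, HasDerivAt r
        ((deriv η x * Real.sin (ω * (x - a₀))
          - η x * (Real.cos (ω * (x - a₀)) * ω)) / (Real.sin (ω * (x - a₀)))^2) x := by
      intro x hx
      exact (hd1 x hx).hasDerivAt.div (hyd x) (hy_pos x ⟨hx.1.le, hx.2.le⟩).ne'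
    have hra : r a = 0 := by simp [hr, ha]
    have hrb : r b = 0 := by simp [hr, hb]
    have hr_pos : ∀ x ∈ Ioo a b, 0 < r x := fun x hx =>
      div_pos (hpos x hx) (hy_pos x ⟨hx.1.le, hx.2.le⟩)
    obtain ⟨s, hs, t, ht, hds, hdt⟩ := exists_pos_neg_deriv hab hr_cont
      (fun x hx => (hrd x hx).differentiableAt) hra hrb hr_pos
    have htab : t ∈ Ioo a b := ⟨hs.1.trans ht.1, ht.2⟩
    have hsub : Icc s t ⊆ Ioo a b := fun x hx =>
      ⟨hs.1.trans_le hx.1, hx.2.trans_lt ht.2⟩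
    -- W is antitone on [s, t]
    have hW_anti : AntitoneOn W (Icc s t) := by
      apply antitoneOn_of_deriv_nonpos (convex_Icc s t)
      · exact fun x hx => ((hWd x (hsub hx)).differentiableAt.continuousAt).continuousWithinAt
      · intro x hx
        rw [interior_Icc] at hx
        exact (hWd x (hsub (Ioo_subset_Icc_self hx))).differentiableAt.differentiableWithinAt
      · intro x hx
        rw [interior_Icc] at hx
        exact hWderiv_nonpos x (hsub (Ioo_subset_Icc_self hx))
    -- W s < 0
    have hys : 0 < Real.sin (ω * (s - a₀)) := hy_pos s ⟨hs.1.le, hs.2.le⟩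
    have hyt : 0 < Real.sin (ω * (t - a₀)) := hy_pos t ⟨htab.1.le, htab.2.le⟩
    have hWs : W s < 0 := by
      rw [(hrd s hs).deriv] at hds
      have hnum : 0 < deriv η s * Real.sin (ω * (s - a₀))
          - η s * (Real.cos (ω * (s - a₀)) * ω) := by
        by_contra hn
        push_neg at hn
        have : (deriv η s * Real.sin (ω * (s - a₀))
            - η s * (Real.cos (ω * (s - a₀)) * ω)) / (Real.sin (ω * (s - a₀)))^2 ≤ 0 :=
          div_nonpos_of_nonpos_of_nonneg hn (by positivity)
        linarith
      simp only [hW]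
      linarith
    have hWt : W t ≤ W s := hW_anti ⟨le_rfl, ht.1.le⟩ ⟨ht.1.le, le_rfl⟩ ht.1.le
    -- but then deriv r t > 0, contradiction
    rw [(hrd t htab).deriv] at hdt
    have hnum_t : deriv η t * Real.sin (ω * (t - a₀))
        - η t * (Real.cos (ω * (t - a₀)) * ω) < 0 := by
      by_contra hn
      push_neg at hn
      have : 0 ≤ (deriv η t * Real.sin (ω * (t - a₀))
          - η t * (Real.cos (ω * (t - a₀)) * ω)) / (Real.sin (ω * (t - a₀)))^2 :=
        div_nonneg hn (by positivity)
      linarith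
    have : W t > 0 := by simp only [hW]; linarith
    linarith
  · -- case c ≥ 1
    intro hc1
    obtain ⟨s, hs, t, ht, hds, hdt⟩ := exists_pos_neg_deriv hab hcont hd1 ha hb hpos
    have hsub : Icc s t ⊆ Ioo a b := fun x hx =>
      ⟨hs.1.trans_le hx.1, hx.2.trans_lt ht.2⟩
    have hmono : MonotoneOn (deriv η) (Icc s t) := by
      apply monotoneOn_of_deriv_nonneg (convex_Icc s t)
      · exact fun x hx => ((hd2 x (hsub hx)).continuousAt).continuousWithinAt
      · intro x hx
        rw [interior_Icc] at hx
        exact (hd2 x (hsub (Ioo_subset_Icc_self hx))).differentiableWithinAt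
      · intro x hx
        rw [interior_Icc] at hx
        have hx' := hsub (Ioo_subset_Icc_self hx)
        have h1 := hode x hx'
        have h2 := hpos x hx'
        nlinarith
    have := hmono ⟨le_rfl, ht.1.le⟩ ⟨ht.1.le, le_rfl⟩ ht.1.le
    linarith
end

section
/- Let 0 ≤ B < C be real numbers. Then there exists T > 0 such that for every L > T there exist a twice continuously differentiable function η : [0,L] → ℝ and a constant ε > 0 with η > 0 on (0,L), η(0) = η(L) = 0, and η″(t) − 2B·|η′(t)| + C²·η(t) ≥ ε · η(t) for all t ∈ (0,L). -/
open Set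


private lemma quad_aux {A D E x s : ℝ} (hA : 0 < A) (hx : 0 ≤ x) (hs : 0 ≤ s)
    (h : D ^ 2 ≤ 4 * A * E) : 0 ≤ A * x ^ 2 - D * (x * s) + E * s ^ 2 := by
  nlinarith [sq_nonneg (2 * A * x - D * s), sq_nonneg s, mul_nonneg hx hs]

set_option maxHeartbeats 1000000 in
/-- **Damped harmonic oscillator lemma** (underlying Proposition 1.10): given constants
`0 ≤ B < C`, there is a threshold `T > 0` such that on every interval `[0, L]` with
`L > T` there exist a `C²` function `η`, positive inside and vanishing at the endpoints,
and `ε > 0` with `η″ − 2B|η′| + C²η ≥ ε·η` on `(0, L)`. -/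
theorem damped_oscillator_gncc
    {B C : ℝ} (hB : 0 ≤ B) (hBC : B < C) :
    ∃ T : ℝ, 0 < T ∧ ∀ L : ℝ, T < L →
      ∃ (η : ℝ → ℝ) (ε : ℝ), 0 < ε ∧
        ContDiffOn ℝ 2 η (Icc 0 L) ∧
        (∀ t ∈ Ioo 0 L, 0 < η t) ∧ η 0 = 0 ∧ η L = 0 ∧
        (∀ t ∈ Ioo 0 L,
          ε * η t ≤ deriv (deriv η) t - 2 * B * |deriv η t| + C ^ 2 * η t) := by
  have hδ : 0 < C ^ 2 - B ^ 2 := by nlinarith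
  set δ : ℝ := C ^ 2 - B ^ 2 with hδdef
  set m : ℕ := ⌈2 * B ^ 2 / δ⌉₊ with hmdef
  set M : ℝ := (m : ℝ) with hMdef
  have hM0 : 0 ≤ M := Nat.cast_nonneg m
  have hm : 2 * B ^ 2 ≤ M * δ := by
    have h1 : 2 * B ^ 2 / δ ≤ M := Nat.le_ceil _
    rw [div_le_iff₀ hδ] at h1
    linarith
  refine ⟨Real.pi * Real.sqrt (4 * (M + 2) / δ), by positivity, ?_⟩
  intro L hTL
  have hTpos : 0 < Real.pi * Real.sqrt (4 * (M + 2) / δ) := by positivity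
  have hL0 : 0 < L := lt_trans hTpos hTL
  set ω : ℝ := Real.pi / L with hωdef
  have hω : 0 < ω := by positivity
  have hωL : ω * L = Real.pi := div_mul_cancel₀ _ (ne_of_gt hL0)
  have hsmall : (M + 2) * ω ^ 2 ≤ δ / 4 := by
    have hT2 : (Real.pi * Real.sqrt (4 * (M + 2) / δ)) ^ 2 = Real.pi ^ 2 * (4 * (M + 2) / δ) := by
      rw [mul_pow, Real.sq_sqrt (by positivity)]
    have hL2 : Real.pi ^ 2 * (4 * (M + 2) / δ) < L ^ 2 := by
      rw [← hT2]; exact pow_lt_pow_left₀ hTL hTpos.le (by norm_num)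
    have h4 : Real.pi ^ 2 * (4 * (M + 2)) < δ * L ^ 2 := by
      have := mul_lt_mul_of_pos_left hL2 hδ
      calc Real.pi ^ 2 * (4 * (M + 2)) = δ * (Real.pi ^ 2 * (4 * (M + 2) / δ)) := by
            field_simp
        _ < δ * L ^ 2 := this
    have hω2L : ω ^ 2 * L ^ 2 = Real.pi ^ 2 := by
      rw [← mul_pow, hωL]
    nlinarith [mul_pos hL0 hL0, sq_nonneg ω, hδ]
  set η : ℝ → ℝ := fun t => Real.sin (ω * t) ^ (m + 2) with hηdef
  refine ⟨η, δ / 4, by positivity, ?_, ?_, ?_, ?_, ?_⟩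
  · exact (((Real.contDiff_sin.comp (contDiff_const.mul contDiff_id)).pow (m + 2)).of_le
      le_top).contDiffOn
  · intro t ht
    have h1 : 0 < ω * t := mul_pos hω ht.1
    have h2 : ω * t < Real.pi := by rw [← hωL]; exact (mul_lt_mul_of_pos_left ht.2 hω)
    exact pow_pos (Real.sin_pos_of_pos_of_lt_pi h1 h2) _
  · simp [hηdef]
  · simp [hηdef, hωL]
  · -- main inequality
    have hf : ∀ u : ℝ, HasDerivAt (fun v => ω * v) ω u := fun u => by
      simpa using (hasDerivAt_id u).const_mul ω
    have hsin : ∀ u : ℝ, HasDerivAt (fun v => Real.sin (ω * v)) (Real.cos (ω * u) * ω) u :=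
      fun u => (Real.hasDerivAt_sin (ω * u)).comp u (hf u)
    have hη' : ∀ u : ℝ, HasDerivAt η
        (((m : ℝ) + 2) * Real.sin (ω * u) ^ (m + 1) * (Real.cos (ω * u) * ω)) u := fun u => by
      have := (hsin u).fun_pow (m + 2)
      push_cast at this
      simpa using this
    have hde' : ∀ u : ℝ, deriv η u
        = ((m : ℝ) + 2) * Real.sin (ω * u) ^ (m + 1) * (Real.cos (ω * u) * ω) :=
      fun u => (hη' u).deriv
    have hg : ∀ u : ℝ, HasDerivAt
        (fun v => ((m : ℝ) + 2) * Real.sin (ω * v) ^ (m + 1) * (Real.cos (ω * v) * ω))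
        ((((m : ℝ) + 2) * (((m : ℝ) + 1) * Real.sin (ω * u) ^ m * (Real.cos (ω * u) * ω)))
            * (Real.cos (ω * u) * ω)
          + (((m : ℝ) + 2) * Real.sin (ω * u) ^ (m + 1)) * (-Real.sin (ω * u) * ω * ω)) u :=
      fun u => by
        have h1 : HasDerivAt (fun v => ((m : ℝ) + 2) * Real.sin (ω * v) ^ (m + 1))
            (((m : ℝ) + 2) * (((m : ℝ) + 1) * Real.sin (ω * u) ^ m * (Real.cos (ω * u) * ω))) u := by
          have := ((hsin u).pow (m + 1)).const_mul ((m : ℝ) + 2)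
          push_cast at this
          simpa using this
        have h2 : HasDerivAt (fun v => Real.cos (ω * v) * ω)
            (-Real.sin (ω * u) * ω * ω) u :=
          ((Real.hasDerivAt_cos (ω * u)).comp u (hf u)).mul_const ω
        simpa [mul_comm, mul_left_comm, mul_assoc] using h1.fun_mul h2
    have hdd : ∀ u : ℝ, deriv (deriv η) u
        = (((m : ℝ) + 2) * (((m : ℝ) + 1) * Real.sin (ω * u) ^ m * (Real.cos (ω * u) * ω)))
            * (Real.cos (ω * u) * ω)
          + (((m : ℝ) + 2) * Real.sin (ω * u) ^ (m + 1)) * (-Real.sin (ω * u) * ω * ω) := by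
      intro u
      have : deriv η = fun v =>
          ((m : ℝ) + 2) * Real.sin (ω * v) ^ (m + 1) * (Real.cos (ω * v) * ω) :=
        funext hde'
      rw [this]
      exact (hg u).deriv
    intro t ht
    have h1 : 0 < ω * t := mul_pos hω ht.1
    have h2 : ω * t < Real.pi := by rw [← hωL]; exact (mul_lt_mul_of_pos_left ht.2 hω)
    have hst : 0 < Real.sin (ω * t) := Real.sin_pos_of_pos_of_lt_pi h1 h2
    rw [hdd t, hde' t]
    set s : ℝ := Real.sin (ω * t) with hsdef
    set cc : ℝ := Real.cos (ω * t) with hccdef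
    have habs : |((m : ℝ) + 2) * s ^ (m + 1) * (cc * ω)|
        = ((m : ℝ) + 2) * s ^ (m + 1) * (|cc| * ω) := by
      rw [abs_mul, abs_mul, abs_mul, abs_of_nonneg (by positivity : (0:ℝ) ≤ (m : ℝ) + 2),
        abs_of_nonneg (pow_nonneg hst.le _), abs_of_pos hω]
    rw [habs]
    set x : ℝ := |cc| with hxdef
    have hx2 : x ^ 2 = cc ^ 2 := sq_abs cc
    set A0 : ℝ := ((M : ℝ) + 2) * ((M : ℝ) + 1) * ω ^ 2 with hA0def
    set D0 : ℝ := 2 * B * ((M : ℝ) + 2) * ω with hD0def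
    set E0 : ℝ := C ^ 2 - δ / 4 - ((M : ℝ) + 2) * ω ^ 2 with hE0def
    have hA0 : 0 < A0 := by rw [hA0def]; positivity
    have hηt : η t = s ^ (m + 2) := rfl
    clear_value A0 D0 E0 x cc s M ω δ
    have hE : B ^ 2 + δ / 2 ≤ E0 := by
      rw [hE0def]
      have : C ^ 2 = B ^ 2 + δ := by rw [hδdef]; ring
      linarith [hsmall]
    have hBk : B ^ 2 * (M + 2) ≤ (M + 1) * E0 := by
      have h3 := mul_le_mul_of_nonneg_left hE (show (0:ℝ) ≤ M + 1 by linarith)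
      linarith [hm, hδ, h3]
    have hkey : D0 ^ 2 ≤ 4 * A0 * E0 := by
      have hmul := mul_le_mul_of_nonneg_left hBk
        (show (0:ℝ) ≤ 4 * ω ^ 2 * (M + 2) by positivity)
      rw [hD0def, hA0def]
      nlinarith [hmul, sq_nonneg ω, hω.le]
    have hquad : 0 ≤ A0 * x ^ 2 - D0 * (x * s) + E0 * s ^ 2 :=
      quad_aux hA0 (hxdef ▸ abs_nonneg cc) hst.le hkey
    have key2 : 0 ≤ s ^ m * (A0 * x ^ 2 - D0 * (x * s) + E0 * s ^ 2) :=
      mul_nonneg (pow_nonneg hst.le m) hquad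
    rw [hηt]
    have expand : (((m : ℝ) + 2) * (((m : ℝ) + 1) * s ^ m * (cc * ω))) * (cc * ω)
          + (((m : ℝ) + 2) * s ^ (m + 1)) * (-s * ω * ω)
          - 2 * B * (((m : ℝ) + 2) * s ^ (m + 1) * (x * ω)) + C ^ 2 * s ^ (m + 2)
          - δ / 4 * s ^ (m + 2)
        = s ^ m * (A0 * x ^ 2 - D0 * (x * s) + E0 * s ^ 2) := by
      rw [hA0def, hD0def, hE0def, hMdef]
      linear_combination (-(((m : ℝ) + 2) * ((m : ℝ) + 1) * ω ^ 2 * s ^ m)) * hx2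
    linarith [key2, expand]
end
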